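/- Let f, g : (X, p̄) → (Y, q̄) be stratified maps between stratified perverse spaces that are homotopic through a stratified homotopy φ : (X × [0,1], p̄) → (Y, q̄) satisfying φ*Dq̄ ≤ Dp̄. Then f and g induce the same homomorphism f_* = g_* : H_*^{p̄}(X;G) → H_*^{q̄}(Y;G) on intersection homology. -/

import Mathlib

noncomputable section
open Set

universe u v w


/-- A filtered space of formal dimension `dim` : closed subspaces
`∅ = X_{-1} ⊆ X_0 ⊆ … ⊆ X_n = X` with `X_n \ X_{n-1} ≠ ∅`. -/
structure FilteredSpace (X : Type u) [TopologicalSpace X] : Type u where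
  dim : ℕ
  filt : ℤ → Set X
  filt_neg : ∀ i : ℤ, i < 0 → filt i = ∅
  filt_mono : Monotone filt
  filt_closed : ∀ i, IsClosed (filt i)
  filt_top : ∀ i : ℤ, (dim : ℤ) ≤ i → filt i = Set.univ
  reg_nonempty : (filt dim \ filt ((dim : ℤ) - 1)).Nonempty

namespace FilteredSpace

variable {X : Type u} {Y : Type v} [TopologicalSpace X] [TopologicalSpace Y]

/-- `S` is a stratum of formal dimension `i` : a connected component of `X_i \ X_{i-1}`. -/
def IsStratumDim (F : FilteredSpace X) (S : Set X) (i : ℤ) : Prop :=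
  ∃ x ∈ F.filt i \ F.filt (i-1), S = connectedComponentIn (F.filt i \ F.filt (i-1)) x

/-- `S` is a stratum of the filtered space. -/
def IsStratum (F : FilteredSpace X) (S : Set X) : Prop := ∃ i, F.IsStratumDim S i

open Classical in
/-- The formal dimension of a stratum. -/
def stratumDim (F : FilteredSpace X) (S : Set X) : ℤ :=
  if h : ∃ i, F.IsStratumDim S i then h.choose else 0

/-- The codimension of a stratum : `dim X - dim S`. -/
def codim (F : FilteredSpace X) (S : Set X) : ℤ := (F.dim : ℤ) - F.stratumDim S

/-- A regular stratum : one contained in `X_n \ X_{n-1}`. -/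
def IsRegularStratum (F : FilteredSpace X) (S : Set X) : Prop :=
  F.IsStratumDim S (F.dim : ℤ)

/-- A singular stratum. -/
def IsSingularStratum (F : FilteredSpace X) (S : Set X) : Prop :=
  F.IsStratum S ∧ ¬ F.IsRegularStratum S

/-- The singular set `Σ = X_{n-1}`. -/
def sing (F : FilteredSpace X) : Set X := F.filt ((F.dim : ℤ) - 1)

/-- A perversity on a filtered space : a function on strata (here, defined on all
subsets) vanishing on regular strata. -/
def IsPerversity (F : FilteredSpace X) (p : Set X → ℤ) : Prop :=
  ∀ S, F.IsRegularStratum S → p S = 0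

/-- The top perversity `t̄ (S) = codim S - 2`. -/
def topPerv (F : FilteredSpace X) : Set X → ℤ := fun S => F.codim S - 2

open Classical in
/-- The dual perversity `D p̄ = t̄ - p̄` (vanishing on regular strata). -/
def dualPerv (F : FilteredSpace X) (p : Set X → ℤ) : Set X → ℤ :=
  fun S => if F.IsRegularStratum S then 0 else F.codim S - 2 - p S

/-- A stratified map between filtered spaces: each stratum of the source is sent into
a stratum of the target of smaller or equal codimension. -/
def IsStratifiedMap (F : FilteredSpace X) (F' : FilteredSpace Y) (f : X → Y) : Prop :=
  Continuous f ∧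
    ∀ S, F.IsStratum S → ∃ T, F'.IsStratum T ∧ f '' S ⊆ T ∧ F'.codim T ≤ F.codim S

end FilteredSpace

/-! ## Topological simplices, filtered simplices -/

/-- The standard topological `m`-simplex. -/
abbrev TSimp (m : ℕ) : Set (Fin (m+1) → ℝ) := stdSimplex ℝ (Fin (m+1))

/-- The number of nonzero barycentric coordinates of a point of the `m`-simplex;
`t` belongs to the `d`-skeleton iff `suppCard t ≤ d + 1`. -/
def suppCard {m : ℕ} (t : TSimp m) : ℕ :=
  @Finset.card _ (@Finset.filter _ (fun j => (t : Fin (m+1) → ℝ) j ≠ 0)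
    (Classical.decPred _) Finset.univ)

/-- The `j`-th face embedding of standard simplices. -/
def faceMap (m : ℕ) (j : Fin (m+2)) : C(TSimp m, TSimp (m+1)) where
  toFun t := ⟨Fin.insertNth j 0 t.1, by
    refine ⟨fun k => ?_, ?_⟩
    · refine Fin.succAboveCases j ?_ ?_ k
      · rw [Fin.insertNth_apply_same]
      · intro l; rw [Fin.insertNth_apply_succAbove]; exact t.2.1 l
    · rw [Fin.sum_univ_succAbove _ j, Fin.insertNth_apply_same]
      simp only [Fin.insertNth_apply_succAbove]
      rw [zero_add]; exact t.2.2⟩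
  continuous_toFun := by
    apply Continuous.subtype_mk
    exact continuous_const.finInsertNth j continuous_subtype_val

/-- The `j`-th vertex of the standard `m`-simplex. -/
def vert (m : ℕ) (j : Fin (m+1)) : TSimp m :=
  ⟨fun i => if i = j then 1 else 0, by
    refine ⟨fun k => ?_, ?_⟩
    · dsimp only; split <;> norm_num
    · classical
      simp [Finset.sum_ite_eq']⟩


/-! ## Generic homology of constraint systems on chain groups -/

section generic

variable {C : ℕ → Type w} [∀ m, AddCommGroup (C m)]
variable {D : ℕ → Type v} [∀ m, AddCommGroup (D m)]

/-- Relative cycles: chains of `A` whose boundary lies in `B`. -/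
def relCycles (d : ∀ m, C m →+ C (m-1)) (A B : ∀ m, AddSubgroup (C m)) (m : ℕ) :
    AddSubgroup (C m) :=
  A m ⊓ (B (m-1)).comap (d m)

/-- Relative boundaries: boundaries of chains of `A`, together with chains of `B`. -/
def relBnds (d : ∀ m, C m →+ C (m-1)) (A B : ∀ m, AddSubgroup (C m)) (m : ℕ) :
    AddSubgroup (C m) :=
  (A (m+1)).map (d (m+1)) ⊔ B m

/-- Relative homology of the pair of constraint systems `(A, B)`. -/
abbrev relHomology (d : ∀ m, C m →+ C (m-1)) (A B : ∀ m, AddSubgroup (C m)) (m : ℕ) :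
    Type w :=
  relCycles d A B m ⧸
    ((relBnds d A B m ⊓ relCycles d A B m).addSubgroupOf (relCycles d A B m))

/-- The homology class of a relative cycle. -/
def hcl (d : ∀ m, C m →+ C (m-1)) (A B : ∀ m, AddSubgroup (C m)) {m : ℕ}
    (ξ : C m) (h : ξ ∈ relCycles d A B m) : relHomology d A B m :=
  QuotientAddGroup.mk (⟨ξ, h⟩ : relCycles d A B m)

/-- `f` induces an isomorphism in homology, compatibly with classes of cycles. -/
def InducesIso (d : ∀ m, C m →+ C (m-1)) (A B : ∀ m, AddSubgroup (C m))
    (d' : ∀ m, D m →+ D (m-1)) (A' B' : ∀ m, AddSubgroup (D m)) (m : ℕ)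
    (f : C m →+ D m) : Prop :=
  ∃ φ : relHomology d A B m ≃+ relHomology d' A' B' m,
    ∀ (ξ : C m) (h : ξ ∈ relCycles d A B m) (h' : f ξ ∈ relCycles d' A' B' m),
      φ (hcl d A B ξ h) = hcl d' A' B' (f ξ) h'

/-- The homomorphism induced in homology by an inclusion of constraint systems. -/
def inclInduced (d : ∀ m, C m →+ C (m-1)) (A B A' B' : ∀ m, AddSubgroup (C m))
    (hA : ∀ m, A m ≤ A' m) (hB : ∀ m, B m ≤ B' m) (m : ℕ) :
    relHomology d A B m →+ relHomology d A' B' m := by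
  have hZ : relCycles d A B m ≤ relCycles d A' B' m := by
    rintro ξ ⟨h1, h2⟩
    exact ⟨hA _ h1, hB _ h2⟩
  refine QuotientAddGroup.map _ _ (AddSubgroup.inclusion hZ) ?_
  intro x hx
  rw [AddSubgroup.mem_addSubgroupOf] at hx
  rw [AddSubgroup.mem_comap, AddSubgroup.mem_addSubgroupOf, AddSubgroup.coe_inclusion]
  refine ⟨?_, hZ x.2⟩
  exact (sup_le_sup (AddSubgroup.map_mono (hA _)) (hB _) : _ ≤ relBnds d A' B' m) hx.1

end generic

/-! ## Filtered simplices and their chain complexes -/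

/-- A simplex of `X` together with a block assignment of its vertices:
a candidate filtered simplex, the blocks recording the join decomposition
`Δ = Δ_0 ∗ ⋯ ∗ Δ_n`. -/
structure PreSimplex (X : Type u) [TopologicalSpace X] (m : ℕ) : Type u where
  map : C(TSimp m, X)
  block : Fin (m+1) → ℤ

variable {X : Type u} {Y : Type v} [TopologicalSpace X] [TopologicalSpace Y]

/-- The `j`-th face of a pre-simplex. -/
def PreSimplex.face {m : ℕ} (σ : PreSimplex X (m+1)) (j : Fin (m+2)) : PreSimplex X m :=
  ⟨σ.map.comp (faceMap m j), σ.block ∘ j.succAbove⟩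

/-- A generator system for chain complexes: generators and face operators. -/
structure SimpSystem : Type (u+1) where
  Gen : ℕ → Type u
  face : ∀ m : ℕ, Fin (m+2) → Gen (m+1) → Gen m

/-- The system of pre-filtered simplices of `X`. -/
abbrev filtSys (X : Type u) [TopologicalSpace X] : SimpSystem.{u} where
  Gen m := PreSimplex X m
  face _ j σ := σ.face j

/-- The system of all singular simplices of `X`. -/
abbrev singSys (X : Type u) [TopologicalSpace X] : SimpSystem.{u} where
  Gen m := C(TSimp m, X)
  face m j σ := σ.comp (faceMap m j)

namespace SimpSystem

variable (S : SimpSystem.{u}) (G : Type w) [AddCommGroup G]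

/-- Chains on the generators of `S`, with coefficients in `G`. -/
abbrev Chains (m : ℕ) : Type _ := S.Gen m →₀ G

/-- The boundary operator. -/
def bdry (m : ℕ) : S.Chains G (m+1) →+ S.Chains G m :=
  Finsupp.liftAddHom fun σ =>
    ∑ j : Fin (m+2), (-1 : ℤ) ^ (j : ℕ) • Finsupp.singleAddHom (S.face m j σ)

/-- The boundary operator, vanishing in degree `0`. -/
def bdryFrom : ∀ m : ℕ, S.Chains G m →+ S.Chains G (m-1)
  | 0 => 0
  | (m+1) => S.bdry G m

/-- The subgroup of chains all of whose simplices satisfy `P`. -/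
def suppIn {m : ℕ} (P : S.Gen m → Prop) : AddSubgroup (S.Chains G m) where
  carrier := {ξ | ∀ σ ∈ ξ.support, P σ}
  zero_mem' := by intro σ h; simp at h
  add_mem' := by
    classical
    intro a b ha hb σ h
    rcases Finset.mem_union.mp (Finsupp.support_add h) with h' | h'
    exacts [ha σ h', hb σ h']
  neg_mem' := by
    intro a ha σ h
    rw [Finsupp.support_neg] at h
    exact ha σ h

end SimpSystem

/-! ## Admissibility -/

/-- A singular simplex is `p`-admissible when, for every stratum `S`, the preimage
of `S` is contained in the skeleton of dimension `dim Δ - codim S + p S`. -/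
def MapAdmissible (F : FilteredSpace X) (p : Set X → ℤ) {m : ℕ} (τ : C(TSimp m, X)) : Prop :=
  ∀ S : Set X, F.IsStratum S → ∀ t : TSimp m, τ t ∈ S →
    (suppCard t : ℤ) ≤ (m : ℤ) - F.codim S + p S + 1

/-- A pre-simplex is a filtered simplex when its blocks are monotone and detect the
filtration: `σ⁻¹(X_i) = Δ_0 ∗ ⋯ ∗ Δ_i`. -/
def PreSimplex.IsFiltered (F : FilteredSpace X) {m : ℕ} (σ : PreSimplex X m) : Prop :=
  Monotone σ.block ∧
    ∀ i : ℤ, σ.map ⁻¹' (F.filt i) =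
      {t : TSimp m | ∀ j, (t : Fin (m+1) → ℝ) j ≠ 0 → σ.block j ≤ i}

/-- `p`-admissibility of a pre-simplex. -/
def PreSimplex.Admissible (F : FilteredSpace X) (p : Set X → ℤ) {m : ℕ}
    (σ : PreSimplex X m) : Prop :=
  MapAdmissible F p σ.map

/-- The allowable simplices of the `p`-intersection complex with support in the
region `W` : filtered, `p`-admissible, with image contained in `W`. -/
def Allowable (F : FilteredSpace X) (p : Set X → ℤ) (W : Set X) {m : ℕ}
    (σ : PreSimplex X m) : Prop :=
  σ.IsFiltered F ∧ σ.Admissible F p ∧ Set.range σ.map ⊆ W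

/-- The complex `C_*^{p̄}` of `p`-intersection chains (of filtered simplices),
with support in the region `W` : chains `ξ` such that every simplex of `ξ` and of
`∂ξ` is `p`-admissible (and carried by `W`). -/
def iChains (F : FilteredSpace X) (p : Set X → ℤ) (G : Type w) [AddCommGroup G]
    (W : Set X) (m : ℕ) : AddSubgroup ((filtSys X).Chains G m) :=
  (filtSys X).suppIn G (fun σ : PreSimplex X m => Allowable F p W σ) ⊓
    ((filtSys X).suppIn G (fun σ : PreSimplex X (m-1) => Allowable F p W σ)).comap
      ((filtSys X).bdryFrom G m)

/-- Intersection homology `H_*^{p̄}` of the part of `X` carried by the region `W`,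
relative to the region `W'` (absolute case: `W = univ`, `W' = ∅`). -/
abbrev iH (F : FilteredSpace X) (p : Set X → ℤ) (G : Type w) [AddCommGroup G]
    (W W' : Set X) (m : ℕ) : Type _ :=
  relHomology ((filtSys X).bdryFrom G) (fun k => iChains F p G W k)
    (fun k => iChains F p G W' k) m

/-- MacPherson's complex `I^{p̄}C_*` of singular intersection chains: all singular
simplices, `p̄`-admissibility as above. -/
def mChains (F : FilteredSpace X) (p : Set X → ℤ) (G : Type w) [AddCommGroup G]
    (m : ℕ) : AddSubgroup ((singSys X).Chains G m) :=
  (singSys X).suppIn G (fun τ : C(TSimp m, X) => MapAdmissible F p τ) ⊓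
    ((singSys X).suppIn G (fun τ : C(TSimp (m-1), X) => MapAdmissible F p τ)).comap
      ((singSys X).bdryFrom G m)

/-- The subcomplex of singular chains carried by `W`. -/
def sChains (X : Type u) [TopologicalSpace X] (G : Type w) [AddCommGroup G]
    (W : Set X) (m : ℕ) : AddSubgroup ((singSys X).Chains G m) :=
  (singSys X).suppIn G (fun τ : C(TSimp m, X) => Set.range τ ⊆ W)

/-- Singular homology of the pair of regions `(W, W')` of `X`. -/
abbrev sH (X : Type u) [TopologicalSpace X] (G : Type w) [AddCommGroup G]
    (W W' : Set X) (m : ℕ) : Type _ :=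
  relHomology ((singSys X).bdryFrom G) (fun k => sChains X G W k)
    (fun k => sChains X G W' k) m

/-! ## Pushforwards -/

/-- The canonical block assignment of a singular simplex of a filtered space:
the vertex `j` is assigned the lowest filtration level containing its image. -/
def canonicalBlock (F : FilteredSpace Y) {m : ℕ} (τ : C(TSimp m, Y)) : Fin (m+1) → ℤ :=
  fun j => sInf {i : ℤ | τ (vert m j) ∈ F.filt i}

/-- Pushforward of a pre-simplex along a continuous map, with the canonical blocks
of the target filtration. -/
def pushSimp (F' : FilteredSpace Y) (g : C(X, Y)) {m : ℕ} (σ : PreSimplex X m) :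
    PreSimplex Y m :=
  ⟨g.comp σ.map, canonicalBlock F' (g.comp σ.map)⟩

/-- Pushforward of chains along a continuous map (`σ ↦ f ∘ σ`). -/
def pushChain (F' : FilteredSpace Y) (g : C(X, Y)) (G : Type w) [AddCommGroup G]
    (m : ℕ) : (filtSys X).Chains G m →+ (filtSys Y).Chains G m :=
  Finsupp.mapDomain.addMonoidHom (pushSimp F' g)

/-- Forget the blocks: from filtered chains to singular chains. -/
def forgetChain (X : Type u) [TopologicalSpace X] (G : Type w) [AddCommGroup G]
    (m : ℕ) : (filtSys X).Chains G m →+ (singSys X).Chains G m :=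
  Finsupp.mapDomain.addMonoidHom (fun σ : PreSimplex X m => σ.map)

/-- Equip singular chains with canonical blocks. -/
def withBlocks (F : FilteredSpace X) (G : Type w) [AddCommGroup G] (m : ℕ) :
    (singSys X).Chains G m →+ (filtSys X).Chains G m :=
  Finsupp.mapDomain.addMonoidHom
    (fun τ : C(TSimp m, X) => (⟨τ, canonicalBlock F τ⟩ : PreSimplex X m))

/-! ## Tame (modered) intersection chains -/

/-- A pre-simplex is regular when its last join factor `Δ_n` is nonempty,
i.e. some vertex has block equal to the formal dimension of the space. -/
def PreSimplex.RegularS (F : FilteredSpace X) {m : ℕ} (σ : PreSimplex X m) : Prop :=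
  ∃ j, σ.block j = (F.dim : ℤ)

/-- The subgroup of chains carried by the singular set (all simplices singular). -/
def tSub (F : FilteredSpace X) (G : Type w) [AddCommGroup G] (m : ℕ) :
    AddSubgroup ((filtSys X).Chains G m) :=
  (filtSys X).suppIn G (fun σ : PreSimplex X m => ¬ σ.RegularS F)

/-- The quotient complex `𝔠_* = C_*(X)/C_*(Σ)`. -/
abbrev tChains (F : FilteredSpace X) (G : Type w) [AddCommGroup G] (m : ℕ) : Type _ :=
  (filtSys X).Chains G m ⧸ tSub F G m

/-- The projection onto the tame quotient. -/
def tProj (F : FilteredSpace X) (G : Type w) [AddCommGroup G] (m : ℕ) :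
    (filtSys X).Chains G m →+ tChains F G m :=
  QuotientAddGroup.mk' (tSub F G m)

open Classical in
/-- The regular part `∂_reg` of the boundary: only regular faces are kept. -/
def bdryReg (F : FilteredSpace X) (G : Type w) [AddCommGroup G] (m : ℕ) :
    (filtSys X).Chains G (m+1) →+ (filtSys X).Chains G m :=
  Finsupp.liftAddHom fun σ =>
    ∑ j : Fin (m+2), (-1 : ℤ) ^ (j : ℕ) •
      (if (σ.face j).RegularS F then Finsupp.singleAddHom (σ.face j) else 0)

/-- `∂_reg`, vanishing in degree 0. -/
def bdryRegFrom (F : FilteredSpace X) (G : Type w) [AddCommGroup G] :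
    ∀ m : ℕ, (filtSys X).Chains G m →+ (filtSys X).Chains G (m-1)
  | 0 => 0
  | (m+1) => bdryReg F G m

lemma bdryRegFrom_eq_zero (F : FilteredSpace X) (G : Type w) [AddCommGroup G] (m : ℕ)
    (ξ : (filtSys X).Chains G m) (hξ : ξ ∈ tSub F G m) :
    bdryRegFrom F G m ξ = 0 := by
  classical
  cases m with
  | zero => rfl
  | succ m =>
    show bdryReg F G m ξ = 0
    rw [bdryReg, Finsupp.liftAddHom_apply, Finsupp.sum]
    apply Finset.sum_eq_zero
    intro σ hσ
    have hns : ¬ σ.RegularS F := hξ σ hσ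
    have hface : ∀ j : Fin (m+2), ¬ (σ.face j).RegularS F := by
      intro j hj
      obtain ⟨k, hk⟩ := hj
      exact hns ⟨j.succAbove k, hk⟩
    have hzero : (∑ j : Fin (m+2), (-1 : ℤ) ^ (j : ℕ) •
        (if (σ.face j).RegularS F then Finsupp.singleAddHom (σ.face j) else 0) :
        G →+ (filtSys X).Chains G m) = 0 := by
      apply Finset.sum_eq_zero
      intro j _
      rw [if_neg (hface j), smul_zero]
    rw [hzero]
    rfl

/-- The differential `𝔡` induced by `∂_reg` on the tame quotient. -/
def tBdryFrom (F : FilteredSpace X) (G : Type w) [AddCommGroup G] (m : ℕ) :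
    tChains F G m →+ tChains F G (m-1) :=
  QuotientAddGroup.map _ _ (bdryRegFrom F G m)
    (by
      intro ξ hξ
      rw [AddSubgroup.mem_comap, bdryRegFrom_eq_zero F G m ξ hξ]
      exact zero_mem _)

/-- The classes of `p`-admissible chains in the tame quotient. -/
def tAdm (F : FilteredSpace X) (p : Set X → ℤ) (G : Type w) [AddCommGroup G] (m : ℕ) :
    AddSubgroup (tChains F G m) :=
  ((filtSys X).suppIn G
      (fun σ : PreSimplex X m => σ.IsFiltered F ∧ σ.Admissible F p)).map (tProj F G m)

/-- The tame `p`-intersection complex `𝔠_*^{p̄}` : classes of admissible chains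
whose `𝔡`-boundary is again (the class of) an admissible chain. -/
def tIC (F : FilteredSpace X) (p : Set X → ℤ) (G : Type w) [AddCommGroup G] (m : ℕ) :
    AddSubgroup (tChains F G m) :=
  tAdm F p G m ⊓ (tAdm F p G (m-1)).comap (tBdryFrom F G m)

/-- Tame intersection homology `𝔥_*^{p̄}(X; G)`. -/
abbrev tH (F : FilteredSpace X) (p : Set X → ℤ) (G : Type w) [AddCommGroup G] (m : ℕ) :
    Type _ :=
  relHomology (tBdryFrom F G) (fun k => tIC F p G k) (fun _ => ⊥) m

/-! ## Products with a factor -/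

/-- The product filtration on `M × X` : `(M × X)_i = M × X_i`. -/
def FilteredSpace.prodLeft (M : Type v) [TopologicalSpace M] [Nonempty M]
    (F : FilteredSpace X) : FilteredSpace (M × X) where
  dim := F.dim
  filt i := univ ×ˢ F.filt i
  filt_neg i h := by rw [F.filt_neg i h, Set.prod_empty]
  filt_mono := fun i j h => Set.prod_mono (le_refl _) (F.filt_mono h)
  filt_closed i := isClosed_univ.prod (F.filt_closed i)
  filt_top i h := by rw [F.filt_top i h, Set.univ_prod_univ]
  reg_nonempty := by
    obtain ⟨x, hx1, hx2⟩ := F.reg_nonempty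
    exact ⟨(Classical.arbitrary M, x), ⟨trivial, hx1⟩, fun h => hx2 h.2⟩

/-- The product filtration on `X × M` : `(X × M)_i = X_i × M`. -/
def FilteredSpace.prodRight (M : Type v) [TopologicalSpace M] [Nonempty M]
    (F : FilteredSpace X) : FilteredSpace (X × M) where
  dim := F.dim
  filt i := F.filt i ×ˢ univ
  filt_neg i h := by rw [F.filt_neg i h, Set.empty_prod]
  filt_mono := fun i j h => Set.prod_mono (F.filt_mono h) (le_refl _)
  filt_closed i := (F.filt_closed i).prod isClosed_univ
  filt_top i h := by rw [F.filt_top i h, Set.univ_prod_univ]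
  reg_nonempty := by
    obtain ⟨x, hx1, hx2⟩ := F.reg_nonempty
    exact ⟨(x, Classical.arbitrary M), ⟨hx1, trivial⟩, fun h => hx2 h.1⟩

/-- The perversity induced on `M × X` by a perversity on `X`
(a stratum `M × S` is sent to the value on `S`). -/
def pervProdLeft (p : Set X → ℤ) : Set (M' × X) → ℤ := fun T => p (Prod.snd '' T)

/-- The perversity induced on `X × M` by a perversity on `X`. -/
def pervProdRight (p : Set X → ℤ) : Set (X × M') → ℤ := fun T => p (Prod.fst '' T)

/-! ## The open cone -/

/-- The relation collapsing `L × {0}` in `L × [0,1)`. -/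
def coneSetoid (L : Type u) [TopologicalSpace L] :
    Setoid (L × {t : ℝ // 0 ≤ t ∧ t < 1}) where
  r a b := a = b ∨ (a.2.1 = 0 ∧ b.2.1 = 0)
  iseqv := by
    refine ⟨fun a => Or.inl rfl, ?_, ?_⟩
    · rintro a b (rfl | h)
      exacts [Or.inl rfl, Or.inr ⟨h.2, h.1⟩]
    · rintro a b c (rfl | h) (rfl | h')
      exacts [Or.inl rfl, Or.inr h', Or.inr h, Or.inr ⟨h.1, h'.2⟩]

/-- The open cone `c̊L = L × [0,1) / (L × {0})`. -/
abbrev OpenCone (L : Type u) [TopologicalSpace L] : Type u := Quotient (coneSetoid L)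

/-- The point `[x, t]` of the open cone. -/
def conePt {L : Type u} [TopologicalSpace L] (x : L) (t : {t : ℝ // 0 ≤ t ∧ t < 1}) :
    OpenCone L :=
  Quotient.mk (coneSetoid L) (x, t)

/-- The parameter `0` of the cone. -/
def czero : {t : ℝ // 0 ≤ t ∧ t < 1} := ⟨0, le_refl 0, zero_lt_one⟩

/-- The vertex `𝓌` of the open cone on a (nonempty) filtered space. -/
def coneVertexOf {L : Type u} [TopologicalSpace L] (FL : FilteredSpace L) : OpenCone L :=
  conePt FL.reg_nonempty.choose czero

/-- The cone `c̊A ⊆ c̊L` on a subset `A ⊆ L` (it contains the vertex; `c̊∅ = {𝓌}`). -/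
def coneSet {L : Type u} [TopologicalSpace L] (A : Set L) : Set (OpenCone L) :=
  {z | ∃ x t, z = conePt x t ∧ (t.1 = 0 ∨ x ∈ A)}

lemma coneSet_mono {L : Type u} [TopologicalSpace L] {A B : Set L} (h : A ⊆ B) :
    coneSet A ⊆ coneSet B := by
  rintro z ⟨x, t, rfl, h0 | hA⟩
  exacts [⟨x, t, rfl, Or.inl h0⟩, ⟨x, t, rfl, Or.inr (h hA)⟩]

lemma preimage_coneSet {L : Type u} [TopologicalSpace L] (A : Set L) :
    (Quotient.mk (coneSetoid L)) ⁻¹' (coneSet A) =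
      {a : L × {t : ℝ // 0 ≤ t ∧ t < 1} | a.2.1 = 0 ∨ a.1 ∈ A} := by
  ext ⟨x, t⟩
  constructor
  · rintro ⟨x', t', he, ht'⟩
    have hrel := Quotient.exact he
    rcases hrel with h | h
    · cases h
      exact ht'
    · exact Or.inl h.1
  · intro h
    exact ⟨x, t, rfl, h⟩

/-- The conical filtration on the open cone : `(c̊L)_i = c̊(L_{i-1})`. -/
def coneFiltered {L : Type u} [TopologicalSpace L] (FL : FilteredSpace L) :
    FilteredSpace (OpenCone L) where
  dim := FL.dim + 1
  filt i := if i < 0 then ∅ else coneSet (FL.filt (i-1))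
  filt_neg i h := by rw [if_pos h]
  filt_mono := by
    intro i j hij
    dsimp only
    by_cases hi : i < 0
    · rw [if_pos hi]; exact empty_subset _
    · rw [if_neg hi, if_neg (by omega)]
      exact coneSet_mono (FL.filt_mono (by omega))
  filt_closed i := by
    by_cases hi : i < 0
    · rw [if_pos hi]; exact isClosed_empty
    · rw [if_neg hi]
      rw [← isQuotientMap_quotient_mk'.isClosed_preimage]
      show IsClosed ((Quotient.mk (coneSetoid L)) ⁻¹' (coneSet (FL.filt (i-1))))
      rw [preimage_coneSet]
      have he : {a : L × {t : ℝ // 0 ≤ t ∧ t < 1} | a.2.1 = 0 ∨ a.1 ∈ FL.filt (i-1)} =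
          (univ ×ˢ {t : {t : ℝ // 0 ≤ t ∧ t < 1} | t.1 = 0}) ∪ (FL.filt (i-1) ×ˢ univ) := by
        ext ⟨x, t⟩
        simp only [Set.mem_setOf_eq, Set.mem_union, Set.mem_prod, Set.mem_univ, true_and,
          and_true]
      rw [he]
      refine IsClosed.union (isClosed_univ.prod ?_) ((FL.filt_closed _).prod isClosed_univ)
      have he2 : {t : {t : ℝ // 0 ≤ t ∧ t < 1} | t.1 = 0} =
          (Subtype.val : {t : ℝ // 0 ≤ t ∧ t < 1} → ℝ) ⁻¹' {0} := by rfl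
      rw [he2]
      exact isClosed_singleton.preimage continuous_subtype_val
  filt_top i h := by
    have h' : (0 : ℤ) ≤ i := by
      refine le_trans ?_ h
      positivity
    rw [if_neg (by omega)]
    rw [FL.filt_top (i-1) (by push_cast at h ⊢; omega)]
    apply Set.eq_univ_of_forall
    intro z
    obtain ⟨⟨x, t⟩, rfl⟩ := Quotient.exists_rep z
    exact ⟨x, t, rfl, Or.inr trivial⟩
  reg_nonempty := by
    obtain ⟨x, hx1, hx2⟩ := FL.reg_nonempty
    have hd1 : ((FL.dim + 1 : ℕ) : ℤ) - 1 = (FL.dim : ℤ) := by push_cast; ring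
    refine ⟨conePt x ⟨1/2, by norm_num, by norm_num⟩, ?_, ?_⟩
    · rw [if_neg (by push_cast; omega)]
      refine ⟨x, _, rfl, Or.inr ?_⟩
      rw [hd1]
      exact hx1
    · rw [if_neg (by push_cast; omega)]
      rintro ⟨x', t', he, hp⟩
      have hrel := Quotient.exact he
      rcases hrel with hq | hq
      · rcases hp with h0 | hA
        · rw [← congrArg (fun a => (Prod.snd a).1) hq] at h0
          norm_num at h0
        · apply hx2
          have hx' : x' = x := (congrArg Prod.fst hq).symm
          rw [hx'] at hA
          have hd2 : ((FL.dim + 1 : ℕ) : ℤ) - 1 - 1 = (FL.dim : ℤ) - 1 := by push_cast; ring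
          rw [hd2] at hA
          exact hA
      · norm_num at hq

/-- The perversity induced on `L` by a perversity on the cone `c̊L` :
`p̄(S) = p̄(S × ]0,1[)`. -/
def pervConeSlice {L : Type u} [TopologicalSpace L] (p : Set (OpenCone L) → ℤ) :
    Set L → ℤ :=
  fun S => p {z | ∃ x t, z = conePt x t ∧ x ∈ S ∧ t.1 ≠ 0}

/-! ## The intrinsic filtration -/

/-- Two points of a space are equivalent when some pointed neighbourhoods are
homeomorphic. -/
def PtEquiv (X : Type u) [TopologicalSpace X] (x y : X) : Prop :=
  ∃ (U V : Set X) (hU : IsOpen U) (hV : IsOpen V) (hx : x ∈ U) (hy : y ∈ V)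
    (h : U ≃ₜ V), h ⟨x, hx⟩ = ⟨y, hy⟩

lemma PtEquiv.refl (X : Type u) [TopologicalSpace X] (x : X) : PtEquiv X x x :=
  ⟨univ, univ, isOpen_univ, isOpen_univ, trivial, trivial, Homeomorph.refl _, rfl⟩

/-- The filtration of the intrinsic CS-set `X^*`: `X^*_i` is the union of the
equivalence classes contained in `X_i` (equivalently, formed of strata of
dimension at most `i`). -/
def intrinsicFilt {X : Type u} [TopologicalSpace X] (F : FilteredSpace X) (i : ℤ) :
    Set X :=
  {x | ∀ y, PtEquiv X x y → y ∈ F.filt i}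

/-- The intrinsic filtered space `X^*` associated with a filtered space. -/
def intrinsic {X : Type u} [TopologicalSpace X] (F : FilteredSpace X) :
    FilteredSpace X where
  dim := F.dim
  filt := intrinsicFilt F
  filt_neg i h := by
    rw [Set.eq_empty_iff_forall_notMem]
    intro x hx
    have := hx x (PtEquiv.refl X x)
    rw [F.filt_neg i h] at this
    exact this
  filt_mono := fun i j hij x hx y hy => F.filt_mono hij (hx y hy)
  filt_closed i := by
    rw [← isOpen_compl_iff, isOpen_iff_forall_mem_open]
    intro x hx
    rw [Set.mem_compl_iff, intrinsicFilt, Set.mem_setOf_eq, not_forall] at hx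
    obtain ⟨y, hy⟩ := hx
    rw [_root_.not_imp] at hy
    obtain ⟨⟨U, V, hU, hV, hxU, hyV, h, hhx⟩, hyF⟩ := hy
    refine ⟨Subtype.val '' (⇑h ⁻¹' (Subtype.val ⁻¹' (F.filt i)ᶜ)), ?_, ?_, ?_⟩
    · rintro _ ⟨u, hu, rfl⟩
      intro hcon
      exact hu (hcon (h u).1 ⟨U, V, hU, hV, u.2, (h u).2, h, rfl⟩)
    · exact hU.isOpenMap_subtype_val _
        ((h.continuous.isOpen_preimage _) (continuous_subtype_val.isOpen_preimage _
          (F.filt_closed i).isOpen_compl))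
    · refine ⟨⟨x, hxU⟩, ?_, rfl⟩
      show (h ⟨x, hxU⟩ : X) ∉ F.filt i
      rw [hhx]
      exact hyF
  filt_top i h := by
    apply Set.eq_univ_of_forall
    intro x y hy
    rw [F.filt_top i h]
    trivial
  reg_nonempty := by
    obtain ⟨x, hx1, hx2⟩ := F.reg_nonempty
    refine ⟨x, ?_, ?_⟩
    · intro y hy
      rw [F.filt_top _ (le_refl _)]
      trivial
    · intro hcon
      exact hx2 (hcon x (PtEquiv.refl X x))

/-- A stratum `S` of `X` is a source of a stratum `T` of `X^*` when `ν(S) ⊆ T`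
and `dim S = dim T`. -/
def IsSource {X : Type u} [TopologicalSpace X] (F : FilteredSpace X) (S T : Set X) :
    Prop :=
  F.IsStratum S ∧ (intrinsic F).IsStratum T ∧ S ⊆ T ∧
    F.stratumDim S = (intrinsic F).stratumDim T

/-- Equivalence of strata: some point of one is equivalent to some point of the
other. -/
def StrataEquiv (X : Type u) [TopologicalSpace X] (S S' : Set X) : Prop :=
  ∃ x ∈ S, ∃ y ∈ S', PtEquiv X x y

/-- `K`-perversity. -/
def IsKPerversity {X : Type u} [TopologicalSpace X] (F : FilteredSpace X)
    (p : Set X → ℤ) : Prop :=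
  F.IsPerversity p ∧
  (∀ S S' T, IsSource F S T → IsSource F S' T → p S = p S') ∧
  (∀ S R, F.IsStratum S → F.IsRegularStratum R → StrataEquiv X S R → 0 ≤ p S) ∧
  (∀ S S' T, F.IsStratum S → IsSource F S' T → F.IsSingularStratum S' →
    S ⊆ closure S' → StrataEquiv X S S' →
      p S ≤ p S' ∧ F.dualPerv p S' ≤ F.dualPerv p S)

open Classical in
/-- The perversity `ν_* p̄` induced on `X^*` by a perversity on `X` :
its value on a stratum `T` of `X^*` is the value of `p̄` on any source of `T`. -/
def pushPerv {X : Type u} [TopologicalSpace X] (F : FilteredSpace X) (p : Set X → ℤ) :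
    Set X → ℤ :=
  fun T => if h : ∃ S, IsSource F S T then p h.choose else 0

open Classical in
/-- The pullback perversity `f^* q̄` of a perversity along a stratified map:
`(f^* q̄)(S) = q̄(S^f)`. -/
def pullPerv {X : Type u} {Y : Type v} [TopologicalSpace X] [TopologicalSpace Y]
    (F : FilteredSpace X) (F' : FilteredSpace Y) (f : X → Y) (q : Set Y → ℤ) :
    Set X → ℤ :=
  fun S => if h : ∃ T, F'.IsStratum T ∧ f '' S ⊆ T then q h.choose else 0

/-- The intrinsic aggregation `ν : X → X^*` (the identity map), as a pushforward of
filtered chains: blocks are recomputed with respect to the intrinsic filtration. -/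
def nuChain {X : Type u} [TopologicalSpace X] (F : FilteredSpace X) (G : Type w)
    [AddCommGroup G] (m : ℕ) :
    (filtSys X).Chains G m →+ (filtSys X).Chains G m :=
  pushChain (intrinsic F) (ContinuousMap.id X) G m

/-! ## CS sets -/

/-- A CS-set: each `X_i ∖ X_{i-1}` is a topological `i`-manifold (possibly empty)
and points of `X_i ∖ X_{i-1}`, `i ≠ n`, have conical charts `U × c̊L ≅ V` with `L`
a compact (Hausdorff) filtered space of formal dimension `n - i - 1`. -/
def IsCSSet {X : Type u} [TopologicalSpace X] (F : FilteredSpace X) : Prop :=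
  (∀ i : ℕ, ∀ x, ∀ hx : x ∈ F.filt i \ F.filt ((i : ℤ) - 1),
      ∃ V : Set ↥(F.filt i \ F.filt ((i : ℤ) - 1)), IsOpen V ∧ ⟨x, hx⟩ ∈ V ∧
        Nonempty (↥V ≃ₜ (Fin i → ℝ))) ∧
  (∀ i : ℕ, i < F.dim → ∀ x ∈ F.filt i \ F.filt ((i : ℤ) - 1),
    ∃ V : Set X, IsOpen V ∧ x ∈ V ∧
    ∃ U : Set X, x ∈ U ∧ U ⊆ F.filt i \ F.filt ((i : ℤ) - 1) ∧
      IsOpen (Subtype.val ⁻¹' U : Set ↥(F.filt i \ F.filt ((i : ℤ) - 1))) ∧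
    ∃ (L : Type u) (_ : TopologicalSpace L) (_ : T2Space L) (_ : CompactSpace L)
      (FL : FilteredSpace L), (FL.dim : ℤ) = (F.dim : ℤ) - i - 1 ∧
    ∃ φ : (↥U × OpenCone L) ≃ₜ ↥V,
      (∀ u : ↥U, ((φ (u, coneVertexOf FL) : ↥V) : X) = (u : X)) ∧
      (∀ j : ℤ, 0 ≤ j → j ≤ (F.dim : ℤ) - i - 1 →
        Subtype.val '' (⇑φ '' (univ ×ˢ coneSet (FL.filt j))) = V ∩ F.filt (i + j + 1)))

/-- A normal CS-set: one admitting conical charts with connected links. -/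
def IsNormalCSSet {X : Type u} [TopologicalSpace X] (F : FilteredSpace X) : Prop :=
  (∀ i : ℕ, ∀ x, ∀ hx : x ∈ F.filt i \ F.filt ((i : ℤ) - 1),
      ∃ V : Set ↥(F.filt i \ F.filt ((i : ℤ) - 1)), IsOpen V ∧ ⟨x, hx⟩ ∈ V ∧
        Nonempty (↥V ≃ₜ (Fin i → ℝ))) ∧
  (∀ i : ℕ, i < F.dim → ∀ x ∈ F.filt i \ F.filt ((i : ℤ) - 1),
    ∃ V : Set X, IsOpen V ∧ x ∈ V ∧
    ∃ U : Set X, x ∈ U ∧ U ⊆ F.filt i \ F.filt ((i : ℤ) - 1) ∧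
      IsOpen (Subtype.val ⁻¹' U : Set ↥(F.filt i \ F.filt ((i : ℤ) - 1))) ∧
    ∃ (L : Type u) (_ : TopologicalSpace L) (_ : T2Space L) (_ : CompactSpace L)
      (_ : ConnectedSpace L) (FL : FilteredSpace L),
      (FL.dim : ℤ) = (F.dim : ℤ) - i - 1 ∧
    ∃ φ : (↥U × OpenCone L) ≃ₜ ↥V,
      (∀ u : ↥U, ((φ (u, coneVertexOf FL) : ↥V) : X) = (u : X)) ∧
      (∀ j : ℤ, 0 ≤ j → j ≤ (F.dim : ℤ) - i - 1 →
        Subtype.val '' (⇑φ '' (univ ×ˢ coneSet (FL.filt j))) = V ∩ F.filt (i + j + 1)))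

/-! ## Miscellaneous helpers -/

lemma SimpSystem.suppIn_mono (S : SimpSystem.{u}) (G : Type w) [AddCommGroup G] {m : ℕ}
    {P Q : S.Gen m → Prop} (h : ∀ σ, P σ → Q σ) : S.suppIn G P ≤ S.suppIn G Q :=
  fun ξ hξ σ hσ => h σ (hξ σ hσ)

lemma iChains_mono (F : FilteredSpace X) (p : Set X → ℤ) (G : Type w) [AddCommGroup G]
    {W W' : Set X} (h : W ⊆ W') (m : ℕ) :
    iChains F p G W m ≤ iChains F p G W' m := by
  apply inf_le_inf
  · exact (filtSys X).suppIn_mono G (fun σ hσ => ⟨hσ.1, hσ.2.1, hσ.2.2.trans h⟩)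
  · exact AddSubgroup.comap_mono
      ((filtSys X).suppIn_mono G (fun σ hσ => ⟨hσ.1, hσ.2.1, hσ.2.2.trans h⟩))

/-- The inclusion `x ↦ [x, t]` of `L` into the open cone. -/
def coneIncl {L : Type u} [TopologicalSpace L] (t : ℝ) (h0 : 0 ≤ t) (h1 : t < 1) :
    C(L, OpenCone L) where
  toFun x := conePt x ⟨t, h0, h1⟩
  continuous_toFun := by
    apply Continuous.comp
    · exact continuous_quotient_mk'
    · exact continuous_id.prodMk continuous_const

/-- The unit sphere `S^ℓ ⊆ ℝ^{ℓ+1}`. -/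
abbrev Sph (l : ℕ) : Set (EuclideanSpace ℝ (Fin (l+1))) := Metric.sphere 0 1

instance (l : ℕ) : Nonempty (Sph l) :=
  (NormedSpace.sphere_nonempty.mpr zero_le_one).to_subtype

/-- `p̄`-homogeneity: every singular stratum equivalent to a regular stratum has
`p̄(S) ≤ t̄(S)`. -/
def PHomogeneous {X : Type u} [TopologicalSpace X] (F : FilteredSpace X)
    (p : Set X → ℤ) : Prop :=
  ∀ S R, F.IsSingularStratum S → F.IsRegularStratum R → StrataEquiv X S R →
    p S ≤ F.codim S - 2

/-! ## Stratified spaces, more perversities, absolute homology -/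

/-- A stratified space: a filtered space in which the frontier condition holds for
strata: `S ∩ cl S' ≠ ∅` implies `S ⊆ cl S'`. -/
def FilteredSpace.IsStratifiedSpace {X : Type u} [TopologicalSpace X]
    (F : FilteredSpace X) : Prop :=
  ∀ S S', F.IsStratum S → F.IsStratum S' → (S ∩ closure S').Nonempty → S ⊆ closure S'

open Classical in
/-- The maximal (top) perversity `t̄` : `t̄(S) = codim S - 2` on singular strata. -/
def tPerv {X : Type u} [TopologicalSpace X] (F : FilteredSpace X) : Set X → ℤ :=
  fun S => if F.IsRegularStratum S then 0 else F.codim S - 2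

/-- Absolute `p̄`-intersection homology of the region `W` of `X`. -/
abbrev iHa {X : Type u} [TopologicalSpace X] (F : FilteredSpace X) (p : Set X → ℤ)
    (G : Type w) [AddCommGroup G] (W : Set X) (m : ℕ) : Type _ :=
  relHomology ((filtSys X).bdryFrom G) (fun k => iChains F p G W k) (fun _ => ⊥) m

/-- Absolute singular homology of the region `W` of `X`. -/
abbrev sHa (X : Type u) [TopologicalSpace X] (G : Type w) [AddCommGroup G]
    (W : Set X) (m : ℕ) : Type _ :=
  relHomology ((singSys X).bdryFrom G) (fun k => sChains X G W k) (fun _ => ⊥) m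

/-- MacPherson's singular intersection homology `I^{p̄}H_*`. -/
abbrev mH {X : Type u} [TopologicalSpace X] (F : FilteredSpace X) (p : Set X → ℤ)
    (G : Type w) [AddCommGroup G] (m : ℕ) : Type _ :=
  relHomology ((singSys X).bdryFrom G) (fun k => mChains F p G k) (fun _ => ⊥) m

/-! ## Fatal faces and the defect -/

/-- The vertex set of the smallest face `F_S` of `Δ` containing `σ⁻¹(S)`. -/
def vtx {X : Type u} [TopologicalSpace X] {m : ℕ} (σ : PreSimplex X m) (S : Set X) :
    Set (Fin (m+1)) :=
  {j | ∃ t : TSimp m, σ.map t ∈ S ∧ (t : Fin (m+1) → ℝ) j ≠ 0}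

/-- The candidates for the fatal face: proper faces `F_S` with
`dim F_S = dim Δ - codim S + p̄(S)`. -/
def fatalCands {X : Type u} [TopologicalSpace X] (F : FilteredSpace X) (p : Set X → ℤ)
    {m : ℕ} (σ : PreSimplex X m) : Set (Set (Fin (m+1))) :=
  {A | ∃ S, F.IsStratum S ∧ A = vtx σ S ∧ A ≠ univ ∧
    ((A.ncard : ℤ) = (m : ℤ) - F.codim S + p S + 1)}

/-- `A` is (the vertex set of) the `p̄`-fatal face of `σ`: the least candidate. -/
def IsFatalIdx {X : Type u} [TopologicalSpace X] (F : FilteredSpace X) (p : Set X → ℤ)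
    {m : ℕ} (σ : PreSimplex X m) (A : Set (Fin (m+1))) : Prop :=
  A ∈ fatalCands F p σ ∧ ∀ B ∈ fatalCands F p σ, A ⊆ B

/-- `S` is the `p̄`-guilty stratum of `σ` : `F_S` is the fatal face of `σ`. -/
def IsGuilty {X : Type u} [TopologicalSpace X] (F : FilteredSpace X) (p : Set X → ℤ)
    {m : ℕ} (σ : PreSimplex X m) (S : Set X) : Prop :=
  F.IsStratum S ∧ IsFatalIdx F p σ (vtx σ S) ∧
    (((vtx σ S).ncard : ℤ) = (m : ℤ) - F.codim S + p S + 1)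

/-- The `p̄`-defect `ℓ_{p̄}(σ)` : the codimension of the guilty stratum, `0` if `σ` is
of `p̄`-intersection. -/
def defect {X : Type u} [TopologicalSpace X] (F : FilteredSpace X) (p : Set X → ℤ)
    {m : ℕ} (σ : PreSimplex X m) : ℤ :=
  sSup ({0} ∪ {c | ∃ S, IsGuilty F p σ S ∧ c = F.codim S})

/-- The linear simplex with vertices `v j` (a linear self-map of the standard
simplex). -/
def linMap {m : ℕ} (v : Fin (m+1) → TSimp m) : C(TSimp m, TSimp m) where
  toFun t := ⟨fun i => ∑ j, (t : Fin (m+1) → ℝ) j * (v j : Fin (m+1) → ℝ) i, by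
    refine ⟨fun i => ?_, ?_⟩
    · exact Finset.sum_nonneg fun j _ => mul_nonneg (t.2.1 j) ((v j).2.1 i)
    · rw [Finset.sum_comm]
      have he : ∀ j : Fin (m+1),
          (∑ i, (t : Fin (m+1) → ℝ) j * (v j : Fin (m+1) → ℝ) i) = (t : Fin (m+1) → ℝ) j := by
        intro j
        rw [← Finset.mul_sum]; convert mul_one _ using 2; exact (v j).2.2
      rw [Finset.sum_congr rfl (fun j _ => he j)]
      exact t.2.2⟩
  continuous_toFun := by
    apply Continuous.subtype_mk
    apply continuous_pi
    intro i
    apply continuous_finset_sum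
    intro j _
    exact ((continuous_apply j).comp continuous_subtype_val).mul continuous_const

/-! ## Auxiliary development for homotopy invariance -/

section AuxIndices

/-- Value of `succAbove`. -/
lemma val_succAbove {n : ℕ} (p : Fin (n+1)) (i : Fin n) :
    (p.succAbove i).val = if i.val < p.val then i.val else i.val + 1 := by
  rw [Fin.succAbove]
  split
  · rename_i h
    rw [if_pos (by simpa [Fin.lt_def] using h)]
    rfl
  · rename_i h
    rw [if_neg (by simpa [Fin.lt_def] using h)]
    rfl

/-- The collapse map `Fin (n+2) → Fin (n+1)` identifying `k` and `k+1`. -/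
def projIdx (n : ℕ) (k : Fin (n+1)) (i : Fin (n+2)) : Fin (n+1) :=
  if h : i.val ≤ k.val then ⟨i.val, by have := k.isLt; omega⟩
  else ⟨i.val - 1, by have := i.isLt; omega⟩

lemma projIdx_val (n : ℕ) (k : Fin (n+1)) (i : Fin (n+2)) :
    (projIdx n k i).val = if i.val ≤ k.val then i.val else i.val - 1 := by
  unfold projIdx; split_ifs <;> rfl

lemma projIdx_monotone (n : ℕ) (k : Fin (n+1)) : Monotone (projIdx n k) := by
  intro a b hab
  rw [Fin.le_def] at hab ⊢
  rw [projIdx_val, projIdx_val]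
  split_ifs <;> omega

lemma pA1 {n : ℕ} (k : Fin n) (l : Fin (n+1)) :
    projIdx n k.castSucc ((k.succ.castSucc).succAbove l) = l := by
  have hl := l.isLt; have hk := k.isLt
  apply Fin.ext
  simp only [projIdx_val, val_succAbove, Fin.coe_castSucc, Fin.val_succ]
  split_ifs <;> omega

lemma pA2 {n : ℕ} (k : Fin n) (l : Fin (n+1)) :
    projIdx n k.succ ((k.succ.castSucc).succAbove l) = l := by
  have hl := l.isLt; have hk := k.isLt
  apply Fin.ext
  simp only [projIdx_val, val_succAbove, Fin.coe_castSucc, Fin.val_succ]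
  split_ifs <;> omega

lemma pZ {n : ℕ} (l : Fin (n+1)) :
    projIdx n 0 ((0 : Fin (n+2)).succAbove l) = l := by
  have hl := l.isLt
  apply Fin.ext
  simp only [projIdx_val, val_succAbove, Fin.val_zero]
  split_ifs <;> simp_all <;> omega

lemma pL {n : ℕ} (l : Fin (n+1)) :
    projIdx n (Fin.last n) ((Fin.last (n+1)).succAbove l) = l := by
  have hl := l.isLt
  apply Fin.ext
  simp only [projIdx_val, val_succAbove, Fin.val_last]
  split_ifs <;> omega

lemma pLT {r : ℕ} (k' : Fin (r+1)) (j' : Fin (r+2)) (h : j'.val ≤ k'.val) (l : Fin (r+2)) :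
    projIdx (r+1) k'.succ ((j'.castSucc).succAbove l) = j'.succAbove (projIdx r k' l) := by
  have hl := l.isLt; have hk := k'.isLt; have hj := j'.isLt
  apply Fin.ext
  simp only [projIdx_val, val_succAbove, Fin.coe_castSucc, Fin.val_succ]
  split_ifs <;> omega

lemma pGT {r : ℕ} (k' : Fin (r+1)) (j' : Fin (r+2)) (h : k'.val < j'.val) (l : Fin (r+2)) :
    projIdx (r+1) k'.castSucc ((j'.succ).succAbove l) = j'.succAbove (projIdx r k' l) := by
  have hl := l.isLt; have hk := k'.isLt; have hj := j'.isLt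
  apply Fin.ext
  simp only [projIdx_val, val_succAbove, Fin.coe_castSucc, Fin.val_succ]
  split_ifs <;> omega

lemma succ_succAbove_self {n : ℕ} (k : Fin (n+1)) :
    (k.succ).succAbove k = k.castSucc := by
  apply Fin.ext
  simp only [val_succAbove, Fin.coe_castSucc, Fin.val_succ]
  split_ifs <;> omega

end AuxIndices

section AuxSimplex

/-- The support of a point of the standard simplex, as a `Finset`. -/
def suppF {m : ℕ} (t : TSimp m) : Finset (Fin (m+1)) :=
  @Finset.filter _ (fun j => (t : Fin (m+1) → ℝ) j ≠ 0) (Classical.decPred _) Finset.univ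

lemma suppCard_eq {m : ℕ} (t : TSimp m) : suppCard t = (suppF t).card := rfl

lemma mem_suppF {m : ℕ} {t : TSimp m} {j : Fin (m+1)} :
    j ∈ suppF t ↔ (t : Fin (m+1) → ℝ) j ≠ 0 := by
  unfold suppF
  rw [@Finset.mem_filter _ _ (Classical.decPred _)]
  simp

lemma suppF_nonempty {m : ℕ} (t : TSimp m) : (suppF t).Nonempty := by
  rw [Finset.nonempty_iff_ne_empty]
  intro h
  have hz : ∀ j, (t : Fin (m+1) → ℝ) j = 0 := by
    intro j
    by_contra hj
    exact (Finset.eq_empty_iff_forall_notMem.mp h j) (mem_suppF.mpr hj)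
  have hs : ∑ j, (t : Fin (m+1) → ℝ) j = 1 := t.2.2
  rw [Finset.sum_congr rfl (fun j _ => hz j)] at hs
  simp at hs

end AuxSimplex
section AuxStrata

namespace FilteredSpace

variable {X : Type u} [TopologicalSpace X] (F : FilteredSpace X)

lemma level_disjoint {i i' : ℤ} {x : X} (h : x ∈ F.filt i \ F.filt (i-1))
    (h' : x ∈ F.filt i' \ F.filt (i'-1)) : i = i' := by
  by_contra hne
  rcases lt_or_gt_of_ne hne with hlt | hlt
  · exact h'.2 (F.filt_mono (by omega) h.1)
  · exact h.2 (F.filt_mono (by omega) h'.1)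

lemma stratum_subset {S : Set X} {i : ℤ} (h : F.IsStratumDim S i) :
    S ⊆ F.filt i \ F.filt (i-1) := by
  obtain ⟨x, hx, rfl⟩ := h
  exact connectedComponentIn_subset _ _

lemma IsStratumDim.nonempty {S : Set X} {i : ℤ} (h : F.IsStratumDim S i) : S.Nonempty := by
  obtain ⟨x, hx, rfl⟩ := h
  exact ⟨x, mem_connectedComponentIn hx⟩

lemma stratumDim_unique {S : Set X} {i i' : ℤ} (h : F.IsStratumDim S i)
    (h' : F.IsStratumDim S i') : i = i' := by
  obtain ⟨x, hxS⟩ := h.nonempty F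
  exact F.level_disjoint (F.stratum_subset h hxS) (F.stratum_subset h' hxS)

lemma stratumDim_eq {S : Set X} {i : ℤ} (h : F.IsStratumDim S i) : F.stratumDim S = i := by
  have hex : ∃ i, F.IsStratumDim S i := ⟨i, h⟩
  unfold stratumDim
  rw [dif_pos hex]
  exact F.stratumDim_unique hex.choose_spec h

lemma isStratumDim_stratumDim {S : Set X} (h : F.IsStratum S) :
    F.IsStratumDim S (F.stratumDim S) := by
  obtain ⟨i, hi⟩ := h
  rwa [F.stratumDim_eq hi]

lemma stratumDim_bounds {S : Set X} {i : ℤ} (h : F.IsStratumDim S i) :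
    0 ≤ i ∧ i ≤ (F.dim : ℤ) := by
  obtain ⟨x, hx, -⟩ := h
  constructor
  · by_contra hneg
    have : F.filt i = ∅ := F.filt_neg i (by omega)
    rw [this] at hx
    exact hx.1
  · by_contra hgt
    have : F.filt (i-1) = Set.univ := F.filt_top (i-1) (by omega)
    exact hx.2 (this ▸ Set.mem_univ x)

lemma mem_filt_iff_of_level {i j : ℤ} {x : X} (h : x ∈ F.filt i \ F.filt (i-1)) :
    x ∈ F.filt j ↔ i ≤ j := by
  constructor
  · intro hj
    by_contra hij
    exact h.2 (F.filt_mono (by omega) hj)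
  · intro hij
    exact F.filt_mono hij h.1

lemma stratum_eq_of_mem {S S' : Set X} {i i' : ℤ} (h : F.IsStratumDim S i)
    (h' : F.IsStratumDim S' i') {x : X} (hx : x ∈ S) (hx' : x ∈ S') : S = S' := by
  have hxi := F.stratum_subset h hx
  have hxi' := F.stratum_subset h' hx'
  have hii : i = i' := F.level_disjoint hxi hxi'
  subst hii
  obtain ⟨y, hy, rfl⟩ := h
  obtain ⟨y', hy', rfl⟩ := h'
  rw [connectedComponentIn_eq hx, connectedComponentIn_eq hx']

lemma isRegular_of_codim_eq {S : Set X} {i : ℤ} (h : F.IsStratumDim S i)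
    (hc : i = (F.dim : ℤ)) : F.IsRegularStratum S := by rwa [hc] at h

end FilteredSpace
/-- Connected component in a product with a full preconnected factor. -/
lemma connectedComponentIn_prod_univ {X : Type u} {M : Type v} [TopologicalSpace X]
    [TopologicalSpace M] [PreconnectedSpace M] {A : Set X} {x : X} (hx : x ∈ A) (u : M) :
    connectedComponentIn (A ×ˢ (Set.univ : Set M)) (x, u) =
      connectedComponentIn A x ×ˢ Set.univ := by
  apply Set.Subset.antisymm
  · intro z hz
    refine ⟨?_, trivial⟩
    have himg : Prod.fst '' connectedComponentIn (A ×ˢ (Set.univ : Set M)) (x, u) ⊆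
        connectedComponentIn A x := by
      apply IsPreconnected.subset_connectedComponentIn
      · exact (isPreconnected_connectedComponentIn).image _ continuous_fst.continuousOn
      · exact ⟨(x, u), mem_connectedComponentIn ⟨hx, trivial⟩, rfl⟩
      · rintro _ ⟨w, hw, rfl⟩
        exact (connectedComponentIn_subset _ _ hw).1
    exact himg ⟨z, hz, rfl⟩
  · apply IsPreconnected.subset_connectedComponentIn
    · exact (isPreconnected_connectedComponentIn).prod isPreconnected_univ
    · exact ⟨mem_connectedComponentIn hx, trivial⟩
    · exact Set.prod_mono (connectedComponentIn_subset _ _) (le_refl _)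

lemma prodRight_filt_diff {X : Type u} [TopologicalSpace X] (F : FilteredSpace X)
    (i : ℤ) :
    (F.prodRight unitInterval).filt i \ (F.prodRight unitInterval).filt (i-1) =
      (F.filt i \ F.filt (i-1)) ×ˢ (Set.univ : Set unitInterval) := by
  ext ⟨a, b⟩
  show (a, b) ∈ (F.filt i ×ˢ Set.univ) \ (F.filt (i-1) ×ˢ Set.univ) ↔ _
  simp only [Set.mem_diff, Set.mem_prod, Set.mem_univ, and_true]

lemma prodRight_isStratumDim {X : Type u} [TopologicalSpace X] (F : FilteredSpace X)
    {S : Set X} {i : ℤ} (h : F.IsStratumDim S i) :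
    (F.prodRight unitInterval).IsStratumDim (S ×ˢ (Set.univ : Set unitInterval)) i := by
  obtain ⟨x, hx, rfl⟩ := h
  refine ⟨(x, 0), ?_, ?_⟩
  · rw [prodRight_filt_diff]
    exact ⟨hx, trivial⟩
  · rw [prodRight_filt_diff, connectedComponentIn_prod_univ hx]

end AuxStrata
section AuxPrismMaps

open Finset in
lemma sum_indic_insert {n : ℕ} (j : Fin (n+2)) (v : Fin (n+1) → ℝ)
    (P : Fin (n+2) → Prop) [DecidablePred P] :
    (∑ i : Fin (n+2), if P i then (Fin.insertNth j (0:ℝ) v) i else 0) =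
      ∑ l : Fin (n+1), if P (j.succAbove l) then v l else 0 := by
  rw [Fin.sum_univ_succAbove _ j]
  simp [Fin.insertNth_apply_same, Fin.insertNth_apply_succAbove]

def sFun (n : ℕ) (k : Fin (n+1)) (w : Fin (n+2) → ℝ) : Fin (n+1) → ℝ :=
  fun j => ∑ i : Fin (n+2), if projIdx n k i = j then w i else 0

def uFun (n : ℕ) (k : Fin (n+1)) (w : Fin (n+2) → ℝ) : ℝ :=
  ∑ i : Fin (n+2), if k.val < i.val then w i else 0

lemma sFun_mem (n : ℕ) (k : Fin (n+1)) (t : TSimp (n+1)) :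
    sFun n k (t : Fin (n+2) → ℝ) ∈ TSimp n := by
  constructor
  · intro j
    apply Finset.sum_nonneg
    intro i _
    split
    · exact t.2.1 i
    · exact le_refl 0
  · unfold sFun
    rw [Finset.sum_comm]
    have he : ∀ i : Fin (n+2),
        (∑ j : Fin (n+1), if projIdx n k i = j then (t : Fin (n+2) → ℝ) i else 0)
          = (t : Fin (n+2) → ℝ) i := by
      intro i
      rw [Finset.sum_ite_eq]
      simp
    rw [Finset.sum_congr rfl fun i _ => he i]
    exact t.2.2

lemma uFun_nonneg (n : ℕ) (k : Fin (n+1)) (t : TSimp (n+1)) :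
    0 ≤ uFun n k (t : Fin (n+2) → ℝ) := by
  apply Finset.sum_nonneg
  intro i _
  split
  · exact t.2.1 i
  · exact le_refl 0

lemma uFun_le_one (n : ℕ) (k : Fin (n+1)) (t : TSimp (n+1)) :
    uFun n k (t : Fin (n+2) → ℝ) ≤ 1 := by
  calc uFun n k (t : Fin (n+2) → ℝ)
      ≤ ∑ i : Fin (n+2), (t : Fin (n+2) → ℝ) i := by
        apply Finset.sum_le_sum
        intro i _
        split
        · exact le_refl _
        · exact t.2.1 i
    _ = 1 := t.2.2

def sPt (n : ℕ) (k : Fin (n+1)) (t : TSimp (n+1)) : TSimp n :=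
  ⟨sFun n k (t : Fin (n+2) → ℝ), sFun_mem n k t⟩

def uPt (n : ℕ) (k : Fin (n+1)) (t : TSimp (n+1)) : unitInterval :=
  ⟨uFun n k (t : Fin (n+2) → ℝ), uFun_nonneg n k t, uFun_le_one n k t⟩

lemma continuous_sPt (n : ℕ) (k : Fin (n+1)) : Continuous (sPt n k) := by
  apply Continuous.subtype_mk
  apply continuous_pi
  intro j
  apply continuous_finset_sum
  intro i _
  by_cases h : projIdx n k i = j
  · simpa [h] using (show Continuous fun t : TSimp (n+1) => (t : Fin (n+2) → ℝ) i from
      (continuous_apply i).comp continuous_subtype_val)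
  · simpa [h] using (continuous_const : Continuous fun _ : TSimp (n+1) => (0:ℝ))

lemma continuous_uPt (n : ℕ) (k : Fin (n+1)) : Continuous (uPt n k) := by
  apply Continuous.subtype_mk
  apply continuous_finset_sum
  intro i _
  by_cases h : k.val < i.val
  · simpa [h] using (show Continuous fun t : TSimp (n+1) => (t : Fin (n+2) → ℝ) i from
      (continuous_apply i).comp continuous_subtype_val)
  · simpa [h] using (continuous_const : Continuous fun _ : TSimp (n+1) => (0:ℝ))

/-- Faces of the standard simplex send vertices to vertices. -/
lemma faceMap_vert (n : ℕ) (j : Fin (n+2)) (j' : Fin (n+1)) :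
    faceMap n j (vert n j') = vert (n+1) (j.succAbove j') := by
  apply Subtype.ext
  funext i
  refine Fin.succAboveCases
    (α := fun i => Fin.insertNth (α := fun _ => ℝ) j (0:ℝ) ((vert n j' : Fin (n+1) → ℝ)) i
      = (vert (n+1) (j.succAbove j') : Fin (n+2) → ℝ) i) j ?_ (fun l => ?_) i
  · show Fin.insertNth (α := fun _ => ℝ) j (0:ℝ) _ j = _
    rw [Fin.insertNth_apply_same]
    show _ = if j = j.succAbove j' then (1:ℝ) else 0
    rw [if_neg (Ne.symm (Fin.succAbove_ne j j'))]
  · show Fin.insertNth (α := fun _ => ℝ) j (0:ℝ) _ (j.succAbove l) = _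
    rw [Fin.insertNth_apply_succAbove]
    show (if l = j' then (1:ℝ) else 0) = if j.succAbove l = j.succAbove j' then (1:ℝ) else 0
    simp [Fin.succAbove_right_injective.eq_iff]

lemma sPt_vert (n : ℕ) (k : Fin (n+1)) (j : Fin (n+2)) :
    sPt n k (vert (n+1) j) = vert n (projIdx n k j) := by
  apply Subtype.ext
  funext j''
  show (∑ i : Fin (n+2), if projIdx n k i = j'' then (vert (n+1) j : Fin (n+2) → ℝ) i else 0) = _
  show _ = if j'' = projIdx n k j then (1:ℝ) else 0
  rw [Finset.sum_eq_single j]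
  · show (if projIdx n k j = j'' then (if j = j then (1:ℝ) else 0) else 0) = _
    rw [if_pos rfl]
    by_cases h : projIdx n k j = j''
    · rw [if_pos h, if_pos h.symm]
    · rw [if_neg h, if_neg (fun hh => h hh.symm)]
  · intro i _ hij
    show (if projIdx n k i = j'' then (if i = j then (1:ℝ) else 0) else 0) = 0
    rw [if_neg hij]
    simp
  · intro h
    exact absurd (Finset.mem_univ j) h

end AuxPrismMaps
section AuxPrC

variable {X : Type u} {Y : Type v} [TopologicalSpace X] [TopologicalSpace Y]

/-- The `k`-th prism simplex over `θ`, mapped through the homotopy `φ`. -/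
def prC (φ : C(X × unitInterval, Y)) {n : ℕ} (θ : C(TSimp n, X)) (k : Fin (n+1)) :
    C(TSimp (n+1), Y) :=
  ⟨fun t => φ (θ (sPt n k t), uPt n k t),
    φ.continuous.comp ((θ.continuous.comp (continuous_sPt n k)).prodMk (continuous_uPt n k))⟩

lemma prC_apply (φ : C(X × unitInterval, Y)) {n : ℕ} (θ : C(TSimp n, X)) (k : Fin (n+1))
    (t : TSimp (n+1)) : prC φ θ k t = φ (θ (sPt n k t), uPt n k t) := rfl

lemma indic_succAbove_eq {r : ℕ} (j' : Fin (r+2)) (w : Fin (r+2) → ℝ)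
    (ι : Fin (r+2) → Fin (r+1)) (j'' : Fin (r+2)) :
    (∑ l : Fin (r+2), if j'.succAbove (ι l) = j'' then w l else 0) =
      Fin.insertNth (α := fun _ => ℝ) j' 0 (fun l'' => ∑ l, if ι l = l'' then w l else 0) j'' := by
  refine Fin.succAboveCases
    (α := fun j'' => (∑ l, if j'.succAbove (ι l) = j'' then w l else 0) =
      Fin.insertNth (α := fun _ => ℝ) j' 0 (fun l'' => ∑ l, if ι l = l'' then w l else 0) j'')
    j' ?_ (fun l'' => ?_) j''
  · rw [Fin.insertNth_apply_same]
    exact Finset.sum_eq_zero (fun l _ => if_neg (Fin.succAbove_ne j' (ι l)))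
  · rw [Fin.insertNth_apply_succAbove]
    exact Finset.sum_congr rfl
      (fun l _ => if_congr Fin.succAbove_right_injective.eq_iff rfl rfl)

lemma sPt_faceMap {n : ℕ} (k : Fin (n+2)) (j : Fin (n+3)) (t : TSimp (n+1)) :
    (sPt (n+1) k (faceMap (n+1) j t) : Fin (n+2) → ℝ) =
      fun j'' => ∑ l : Fin (n+2),
        if projIdx (n+1) k (j.succAbove l) = j'' then (t : Fin (n+2) → ℝ) l else 0 := by
  funext j''
  show sFun (n+1) k (Fin.insertNth j (0:ℝ) (t : Fin (n+2) → ℝ)) j'' = _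
  unfold sFun
  rw [sum_indic_insert]

lemma sPt_faceMap' {n : ℕ} (k : Fin (n+1)) (j : Fin (n+2)) (t : TSimp n) :
    (sPt n k (faceMap n j t) : Fin (n+1) → ℝ) =
      fun j'' => ∑ l : Fin (n+1),
        if projIdx n k (j.succAbove l) = j'' then (t : Fin (n+1) → ℝ) l else 0 := by
  funext j''
  show sFun n k (Fin.insertNth j (0:ℝ) (t : Fin (n+1) → ℝ)) j'' = _
  unfold sFun
  rw [sum_indic_insert]

lemma uPt_faceMap {n : ℕ} (k : Fin (n+1)) (j : Fin (n+2)) (t : TSimp n) :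
    (uPt n k (faceMap n j t) : ℝ) =
      ∑ l : Fin (n+1), if k.val < (j.succAbove l).val then (t : Fin (n+1) → ℝ) l else 0 := by
  show uFun n k (Fin.insertNth j (0:ℝ) (t : Fin (n+1) → ℝ)) = _
  unfold uFun
  rw [sum_indic_insert]

/-- Identity (B): the `0`-th face of the `0`-th prism simplex is the top of the cylinder. -/
lemma prC_face_zero (φ : C(X × unitInterval, Y)) (g : C(X, Y))
    (hφ1 : ∀ x, φ (x, 1) = g x) {n : ℕ} (θ : C(TSimp n, X)) :
    (prC φ θ 0).comp (faceMap n 0) = g.comp θ := by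
  ext t
  rw [ContinuousMap.comp_apply, prC_apply]
  have hs : sPt n 0 (faceMap n 0 t) = t := by
    apply stdSimplex.ext
    rw [sPt_faceMap']
    funext j''
    rw [Finset.sum_congr rfl (fun l _ => by rw [pZ l]), Finset.sum_ite_eq']
    simp
  have hu : uPt n 0 (faceMap n 0 t) = 1 := by
    apply Subtype.ext
    rw [uPt_faceMap]
    show _ = (1:ℝ)
    rw [Finset.sum_congr rfl (fun l _ => if_pos (by
      have := l.isLt
      simp only [val_succAbove, Fin.val_zero]
      split_ifs <;> simp_all <;> omega))]
    exact t.2.2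
  rw [hs, hu, hφ1]
  rfl

/-- Identity (C): the last face of the last prism simplex is the bottom of the cylinder. -/
lemma prC_face_last (φ : C(X × unitInterval, Y)) (f : C(X, Y))
    (hφ0 : ∀ x, φ (x, 0) = f x) {n : ℕ} (θ : C(TSimp n, X)) :
    (prC φ θ (Fin.last n)).comp (faceMap n (Fin.last (n+1))) = f.comp θ := by
  ext t
  rw [ContinuousMap.comp_apply, prC_apply]
  have hs : sPt n (Fin.last n) (faceMap n (Fin.last (n+1)) t) = t := by
    apply stdSimplex.ext
    rw [sPt_faceMap']
    funext j''
    rw [Finset.sum_congr rfl (fun l _ => by rw [pL l]), Finset.sum_ite_eq']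
    simp
  have hu : uPt n (Fin.last n) (faceMap n (Fin.last (n+1)) t) = 0 := by
    apply Subtype.ext
    rw [uPt_faceMap]
    show _ = (0:ℝ)
    apply Finset.sum_eq_zero
    intro l _
    apply if_neg
    have := l.isLt
    simp only [val_succAbove, Fin.val_last]
    split_ifs <;> omega
  rw [hs, hu, hφ0]
  rfl

/-- Identity (A): adjacent prism simplices share the corresponding face. -/
lemma prC_face_adj (φ : C(X × unitInterval, Y)) {n : ℕ} (θ : C(TSimp n, X)) (k : Fin n) :
    (prC φ θ k.castSucc).comp (faceMap n (k.succ.castSucc)) =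
      (prC φ θ k.succ).comp (faceMap n (k.succ.castSucc)) := by
  ext t
  rw [ContinuousMap.comp_apply, ContinuousMap.comp_apply, prC_apply, prC_apply]
  have hk := k.isLt
  have hs : sPt n k.castSucc (faceMap n (k.succ.castSucc) t) =
      sPt n k.succ (faceMap n (k.succ.castSucc) t) := by
    apply stdSimplex.ext
    rw [sPt_faceMap', sPt_faceMap']
    funext j''
    refine Finset.sum_congr rfl (fun l _ => ?_)
    rw [pA1 k l, pA2 k l]
  have hu : uPt n k.castSucc (faceMap n (k.succ.castSucc) t) =
      uPt n k.succ (faceMap n (k.succ.castSucc) t) := by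
    apply Subtype.ext
    rw [uPt_faceMap, uPt_faceMap]
    refine Finset.sum_congr rfl (fun l _ => if_congr ?_ rfl rfl)
    have := l.isLt
    simp only [val_succAbove, Fin.coe_castSucc, Fin.val_succ]
    split_ifs <;> omega
  rw [hs, hu]

/-- Identity (D): faces below the prism index. -/
lemma prC_face_lt (φ : C(X × unitInterval, Y)) {r : ℕ} (θ : C(TSimp (r+1), X))
    (k' : Fin (r+1)) (j' : Fin (r+2)) (h : j'.val ≤ k'.val) :
    (prC φ θ k'.succ).comp (faceMap (r+1) j'.castSucc) =
      prC φ (θ.comp (faceMap r j')) k' := by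
  ext t
  rw [ContinuousMap.comp_apply, prC_apply, prC_apply, ContinuousMap.comp_apply]
  have hs : sPt (r+1) k'.succ (faceMap (r+1) j'.castSucc t) = faceMap r j' (sPt r k' t) := by
    apply stdSimplex.ext
    rw [sPt_faceMap]
    funext j''
    rw [Finset.sum_congr rfl (fun l _ => by rw [pLT k' j' h l])]
    exact indic_succAbove_eq j' _ (projIdx r k') j''
  have hu : uPt (r+1) k'.succ (faceMap (r+1) j'.castSucc t) = uPt r k' t := by
    apply Subtype.ext
    rw [uPt_faceMap]
    show _ = uFun r k' (t : Fin (r+2) → ℝ)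
    unfold uFun
    refine Finset.sum_congr rfl (fun l _ => if_congr ?_ rfl rfl)
    have := l.isLt
    simp only [val_succAbove, Fin.coe_castSucc, Fin.val_succ]
    split_ifs <;> omega
  rw [hs, hu]

/-- Identity (E): faces above the prism index. -/
lemma prC_face_gt (φ : C(X × unitInterval, Y)) {r : ℕ} (θ : C(TSimp (r+1), X))
    (k' : Fin (r+1)) (j' : Fin (r+2)) (h : k'.val < j'.val) :
    (prC φ θ k'.castSucc).comp (faceMap (r+1) j'.succ) =
      prC φ (θ.comp (faceMap r j')) k' := by
  ext t
  rw [ContinuousMap.comp_apply, prC_apply, prC_apply, ContinuousMap.comp_apply]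
  have hs : sPt (r+1) k'.castSucc (faceMap (r+1) j'.succ t) = faceMap r j' (sPt r k' t) := by
    apply stdSimplex.ext
    rw [sPt_faceMap]
    funext j''
    rw [Finset.sum_congr rfl (fun l _ => by rw [pGT k' j' h l])]
    exact indic_succAbove_eq j' _ (projIdx r k') j''
  have hu : uPt (r+1) k'.castSucc (faceMap (r+1) j'.succ t) = uPt r k' t := by
    apply Subtype.ext
    rw [uPt_faceMap]
    show _ = uFun r k' (t : Fin (r+2) → ℝ)
    unfold uFun
    refine Finset.sum_congr rfl (fun l _ => if_congr ?_ rfl rfl)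
    have := l.isLt
    simp only [val_succAbove, Fin.coe_castSucc, Fin.val_succ]
    split_ifs <;> omega
  rw [hs, hu]

end AuxPrC
section AuxChains

variable {X : Type u} {Y : Type v} [TopologicalSpace X] [TopologicalSpace Y]
variable (G : Type w) [AddCommGroup G]

/-- A singular simplex with its canonical blocks. -/
def preS (F' : FilteredSpace Y) {n : ℕ} (τ : C(TSimp n, Y)) : PreSimplex Y n :=
  ⟨τ, canonicalBlock F' τ⟩

lemma pushSimp_eq_preS (F' : FilteredSpace Y) (g : C(X, Y)) {n : ℕ} (σ : PreSimplex X n) :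
    pushSimp F' g σ = preS F' (g.comp σ.map) := rfl

lemma canonicalBlock_comp (F' : FilteredSpace Y) {n : ℕ} (τ : C(TSimp (n+1), Y))
    (j : Fin (n+2)) :
    canonicalBlock F' (τ.comp (faceMap n j)) = canonicalBlock F' τ ∘ j.succAbove := by
  funext j'
  unfold canonicalBlock
  rw [ContinuousMap.comp_apply, faceMap_vert]
  rfl

lemma preS_face (F' : FilteredSpace Y) {n : ℕ} (τ : C(TSimp (n+1), Y)) (j : Fin (n+2)) :
    (preS F' τ).face j = preS F' (τ.comp (faceMap n j)) := by
  simp [preS, PreSimplex.face, canonicalBlock_comp]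

lemma bdry_single (S : SimpSystem.{u}) (m : ℕ) (σ : S.Gen (m+1)) (a : G) :
    S.bdry G m (Finsupp.single σ a) =
      ∑ j : Fin (m+2), (-1:ℤ)^(j:ℕ) • Finsupp.single (S.face m j σ) a := by
  rw [SimpSystem.bdry, Finsupp.liftAddHom_apply_single, AddMonoidHom.finset_sum_apply]
  refine Finset.sum_congr rfl (fun j _ => ?_)
  rw [AddMonoidHom.smul_apply, Finsupp.singleAddHom_apply]

/-- The prism operator. -/
def prHom (F' : FilteredSpace Y) (φ : C(X × unitInterval, Y)) (n : ℕ) :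
    (filtSys X).Chains G n →+ (filtSys Y).Chains G (n+1) :=
  Finsupp.liftAddHom fun σ =>
    ∑ k : Fin (n+1), (-1:ℤ)^(k:ℕ) • Finsupp.singleAddHom (preS F' (prC φ σ.map k))

lemma prHom_single (F' : FilteredSpace Y) (φ : C(X × unitInterval, Y)) {n : ℕ}
    (σ : PreSimplex X n) (a : G) :
    prHom G F' φ n (Finsupp.single σ a) =
      ∑ k : Fin (n+1), (-1:ℤ)^(k:ℕ) • Finsupp.single (preS F' (prC φ σ.map k)) a := by
  rw [prHom, Finsupp.liftAddHom_apply_single, AddMonoidHom.finset_sum_apply]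
  refine Finset.sum_congr rfl (fun k _ => ?_)
  rw [AddMonoidHom.smul_apply, Finsupp.singleAddHom_apply]

lemma pushChain_single (F' : FilteredSpace Y) (g : C(X, Y)) {n : ℕ}
    (σ : PreSimplex X n) (a : G) :
    pushChain F' g G n (Finsupp.single σ a) = Finsupp.single (preS F' (g.comp σ.map)) a := by
  rw [pushChain, Finsupp.mapDomain.addMonoidHom_apply, Finsupp.mapDomain_single,
    pushSimp_eq_preS]

lemma prHom_support (F' : FilteredSpace Y) (φ : C(X × unitInterval, Y)) {n : ℕ}
    (ξ : (filtSys X).Chains G n) :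
    ∀ τ ∈ (prHom G F' φ n ξ).support,
      ∃ σ ∈ ξ.support, ∃ k : Fin (n+1), τ = preS F' (prC φ σ.map k) := by
  intro τ hτ
  rw [prHom, Finsupp.liftAddHom_apply] at hτ
  classical
  have h1 := Finsupp.support_sum hτ
  obtain ⟨σ, hσ, hτ2⟩ := Finset.mem_biUnion.mp h1
  refine ⟨σ, hσ, ?_⟩
  rw [AddMonoidHom.finset_sum_apply] at hτ2
  have h2 := Finsupp.support_finset_sum hτ2
  obtain ⟨k, _, hτ3⟩ := Finset.mem_biUnion.mp h2
  refine ⟨k, ?_⟩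
  rw [AddMonoidHom.smul_apply, Finsupp.singleAddHom_apply] at hτ3
  have h4 := Finsupp.support_smul hτ3
  have h5 := Finsupp.support_single_subset h4
  exact Finset.mem_singleton.mp h5

end AuxChains
section AuxCore

variable {X : Type u} {Y : Type v} [TopologicalSpace X] [TopologicalSpace Y]
variable (G : Type w) [AddCommGroup G]
variable (F' : FilteredSpace Y) (φ : C(X × unitInterval, Y)) (f g : C(X, Y))

lemma core_boundary (hφ0 : ∀ x, φ (x, 0) = f x) (hφ1 : ∀ x, φ (x, 1) = g x)
    (n : ℕ) (σ : PreSimplex X n) (a : G) :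
    (filtSys Y).bdry G n (prHom G F' φ n (Finsupp.single σ a)) =
      Finsupp.single (preS F' (g.comp σ.map)) a
        - Finsupp.single (preS F' (f.comp σ.map)) a
        + ∑ k : Fin (n+1), ∑ l : Fin n,
            (-1:ℤ)^((k:ℕ) + (((k.succ).succAbove (k.succAbove l)) : Fin (n+2)).val) •
              Finsupp.single (preS F' ((prC φ σ.map k).comp
                (faceMap n ((k.succ).succAbove (k.succAbove l))))) a := by
  rw [prHom_single, map_sum]
  have hterm : ∀ k : Fin (n+1),
      (filtSys Y).bdry G n ((-1:ℤ)^(k:ℕ) • Finsupp.single (preS F' (prC φ σ.map k)) a)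
        = ∑ j : Fin (n+2), (-1:ℤ)^((k:ℕ)+(j:ℕ)) •
            Finsupp.single (preS F' ((prC φ σ.map k).comp (faceMap n j))) a := by
    intro k
    rw [map_zsmul, bdry_single, Finset.smul_sum]
    refine Finset.sum_congr rfl (fun j _ => ?_)
    rw [smul_smul, ← pow_add,
      show (filtSys Y).face n j (preS F' (prC φ σ.map k))
        = preS F' ((prC φ σ.map k).comp (faceMap n j)) from preS_face F' _ j]
  rw [Finset.sum_congr rfl (fun k _ => hterm k)]
  have hsplit : ∀ k : Fin (n+1),
      (∑ j : Fin (n+2), (-1:ℤ)^((k:ℕ)+(j:ℕ)) •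
          Finsupp.single (preS F' ((prC φ σ.map k).comp (faceMap n j))) a)
        = (-1:ℤ)^((k:ℕ)+(k.succ:ℕ)) •
            Finsupp.single (preS F' ((prC φ σ.map k).comp (faceMap n k.succ))) a
          + ((-1:ℤ)^((k:ℕ)+(k.castSucc:ℕ)) •
              Finsupp.single (preS F' ((prC φ σ.map k).comp (faceMap n k.castSucc))) a
            + ∑ l : Fin n,
                (-1:ℤ)^((k:ℕ) + (((k.succ).succAbove (k.succAbove l)) : Fin (n+2)).val) •
                  Finsupp.single (preS F' ((prC φ σ.map k).comp
                    (faceMap n ((k.succ).succAbove (k.succAbove l))))) a) := by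
    intro k
    rw [Fin.sum_univ_succAbove _ (k.succ), Fin.sum_univ_succAbove _ k, succ_succAbove_self]
  rw [Finset.sum_congr rfl (fun k _ => hsplit k), Finset.sum_add_distrib,
    Finset.sum_add_distrib]
  have hA : ∀ k : Fin (n+1),
      (-1:ℤ)^((k:ℕ)+(k.succ:ℕ)) •
          Finsupp.single (preS F' ((prC φ σ.map k).comp (faceMap n k.succ))) a
        = - Finsupp.single (preS F' ((prC φ σ.map k).comp (faceMap n k.succ))) a := by
    intro k
    rw [Fin.val_succ, show (k:ℕ) + ((k:ℕ)+1) = 2*(k:ℕ)+1 by ring, pow_succ, pow_mul,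
      neg_one_sq, one_pow, one_mul, neg_one_zsmul]
  have hB : ∀ k : Fin (n+1),
      (-1:ℤ)^((k:ℕ)+(k.castSucc:ℕ)) •
          Finsupp.single (preS F' ((prC φ σ.map k).comp (faceMap n k.castSucc))) a
        = Finsupp.single (preS F' ((prC φ σ.map k).comp (faceMap n k.castSucc))) a := by
    intro k
    rw [Fin.coe_castSucc, show (k:ℕ)+(k:ℕ) = 2*(k:ℕ) by ring, pow_mul, neg_one_sq,
      one_pow, one_smul]
  rw [Finset.sum_congr rfl (fun k _ => hA k), Finset.sum_congr rfl (fun k _ => hB k),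
    Finset.sum_neg_distrib]
  have e1 : (∑ k : Fin (n+1),
      Finsupp.single (preS F' ((prC φ σ.map k).comp (faceMap n k.succ))) a)
      = (∑ i : Fin n,
          Finsupp.single (preS F' ((prC φ σ.map i.castSucc).comp
            (faceMap n i.castSucc.succ))) a)
        + Finsupp.single (preS F' ((prC φ σ.map (Fin.last n)).comp
            (faceMap n (Fin.last n).succ))) a :=
    Fin.sum_univ_castSucc _
  have e2 : (∑ k : Fin (n+1),
      Finsupp.single (preS F' ((prC φ σ.map k).comp (faceMap n k.castSucc))) a)
      = Finsupp.single (preS F' ((prC φ σ.map (0 : Fin (n+1))).comp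
          (faceMap n (0 : Fin (n+1)).castSucc))) a
        + ∑ i : Fin n,
            Finsupp.single (preS F' ((prC φ σ.map i.succ).comp
              (faceMap n i.succ.castSucc))) a :=
    Fin.sum_univ_succ _
  rw [e1, e2]
  have hmid : ∀ i : Fin n,
      Finsupp.single (preS F' ((prC φ σ.map i.succ).comp (faceMap n i.succ.castSucc))) a
        = Finsupp.single (preS F' ((prC φ σ.map i.castSucc).comp
            (faceMap n i.castSucc.succ))) a := by
    intro i
    rw [Fin.succ_castSucc, prC_face_adj φ σ.map i]
  rw [Finset.sum_congr rfl (fun i _ => hmid i)]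
  have hz : Finsupp.single (preS F' ((prC φ σ.map (0 : Fin (n+1))).comp
      (faceMap n (0 : Fin (n+1)).castSucc))) a = Finsupp.single (preS F' (g.comp σ.map)) a := by
    rw [Fin.castSucc_zero, prC_face_zero φ g hφ1 σ.map]
  have hl : Finsupp.single (preS F' ((prC φ σ.map (Fin.last n)).comp
      (faceMap n (Fin.last n).succ))) a = Finsupp.single (preS F' (f.comp σ.map)) a := by
    rw [Fin.succ_last, prC_face_last φ f hφ0 σ.map]
  rw [hz, hl]
  abel

end AuxCore
section AuxReindex

variable {X : Type u} {Y : Type v} [TopologicalSpace X] [TopologicalSpace Y]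
variable (G : Type w) [AddCommGroup G]
variable (F' : FilteredSpace Y) (φ : C(X × unitInterval, Y)) (f g : C(X, Y))

/-- Forward reindexing map. -/
def reFwd (r : ℕ) (x : Fin (r+2) × Fin (r+1)) : Fin (r+2) × Fin (r+1) :=
  if _ : x.1.val ≤ x.2.val
    then (x.2.succ, ⟨x.1.val, by have := x.2.isLt; omega⟩)
    else (x.2.castSucc, ⟨x.1.val - 1, by have := x.1.isLt; omega⟩)

/-- Backward reindexing map. -/
def reBwd (r : ℕ) (y : Fin (r+2) × Fin (r+1)) : Fin (r+2) × Fin (r+1) :=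
  if _ : y.2.val < y.1.val
    then (⟨y.2.val, by have := y.2.isLt; omega⟩,
          ⟨y.1.val - 1, by have := y.1.isLt; omega⟩)
    else (⟨y.2.val + 1, by have := y.2.isLt; omega⟩,
          ⟨y.1.val, by have h1 := y.1.isLt; have h2 := y.2.isLt; omega⟩)

/-- The reindexing bijection for the off-diagonal prism faces. -/
def reEquiv (r : ℕ) : (Fin (r+2) × Fin (r+1)) ≃ (Fin (r+2) × Fin (r+1)) where
  toFun := reFwd r
  invFun := reBwd r
  left_inv := by
    intro x
    refine Prod.ext (Fin.ext ?_) (Fin.ext ?_) <;>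
      · unfold reFwd reBwd
        split_ifs <;>
          · try dsimp only at *
            try simp only [Fin.val_succ, Fin.coe_castSucc] at *
            try omega
  right_inv := by
    intro x
    refine Prod.ext (Fin.ext ?_) (Fin.ext ?_) <;>
      · unfold reFwd reBwd
        split_ifs <;>
          · try dsimp only at *
            try simp only [Fin.val_succ, Fin.coe_castSucc] at *
            try omega

lemma reindex_sum (r : ℕ) (σ : PreSimplex X (r+1)) (a : G) :
    (∑ k : Fin (r+2), ∑ l : Fin (r+1),
        (-1:ℤ)^((k:ℕ) + (((k.succ).succAbove (k.succAbove l)) : Fin (r+3)).val) •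
          Finsupp.single (preS F' ((prC φ σ.map k).comp
            (faceMap (r+1) ((k.succ).succAbove (k.succAbove l))))) a)
      = - prHom G F' φ r ((filtSys X).bdry G r (Finsupp.single σ a)) := by
  rw [bdry_single, map_sum]
  have h1 : ∀ j' : Fin (r+2),
      prHom G F' φ r ((-1:ℤ)^(j':ℕ) • Finsupp.single ((filtSys X).face r j' σ) a)
        = ∑ k' : Fin (r+1), (-1:ℤ)^((j':ℕ)+(k':ℕ)) •
            Finsupp.single (preS F' (prC φ (σ.map.comp (faceMap r j')) k')) a := by
    intro j'
    rw [map_zsmul, prHom_single, Finset.smul_sum]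
    refine Finset.sum_congr rfl (fun k' _ => ?_)
    rw [smul_smul, ← pow_add]
    rfl
  rw [Finset.sum_congr rfl (fun j' _ => h1 j')]
  simp only [← Finset.sum_neg_distrib]
  rw [← Finset.sum_product', ← Finset.sum_product']
  simp only [Finset.univ_product_univ]
  refine (Fintype.sum_equiv (reEquiv r) _ _ ?_).symm
  intro x
  by_cases h : x.1.val ≤ x.2.val
  · have he : reEquiv r x = (x.2.succ, (⟨x.1.val, by have := x.2.isLt; omega⟩ : Fin (r+1))) := by
      show reFwd r x = _
      unfold reFwd
      rw [dif_pos h]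
    rw [he]
    dsimp only
    have hJ : ((x.2.succ.succ).succAbove ((x.2.succ).succAbove
        (⟨x.1.val, by have := x.2.isLt; omega⟩ : Fin (r+1))) : Fin (r+3)) = x.1.castSucc := by
      apply Fin.ext
      simp only [val_succAbove, Fin.val_succ, Fin.coe_castSucc]
      split_ifs <;> omega
    rw [hJ, prC_face_lt φ σ.map x.2 x.1 h]
    have hsgn : (-1:ℤ)^((x.2.succ:ℕ)+(x.1.castSucc:ℕ)) = -((-1:ℤ)^((x.1:ℕ)+(x.2:ℕ))) := by
      rw [Fin.val_succ, Fin.coe_castSucc,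
        show (x.2:ℕ)+1+(x.1:ℕ) = ((x.1:ℕ)+(x.2:ℕ))+1 by ring, pow_succ]
      ring
    rw [hsgn, neg_smul]
  · have he : reEquiv r x = (x.2.castSucc,
        (⟨x.1.val - 1, by have := x.1.isLt; omega⟩ : Fin (r+1))) := by
      show reFwd r x = _
      unfold reFwd
      rw [dif_neg h]
    rw [he]
    dsimp only
    have hJ : ((x.2.castSucc.succ).succAbove ((x.2.castSucc).succAbove
        (⟨x.1.val - 1, by have := x.1.isLt; omega⟩ : Fin (r+1))) : Fin (r+3)) = x.1.succ := by
      apply Fin.ext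
      simp only [val_succAbove, Fin.val_succ, Fin.coe_castSucc]
      split_ifs <;> omega
    rw [hJ, prC_face_gt φ σ.map x.2 x.1 (by omega)]
    have hsgn : (-1:ℤ)^((x.2.castSucc:ℕ)+(x.1.succ:ℕ)) = -((-1:ℤ)^((x.1:ℕ)+(x.2:ℕ))) := by
      rw [Fin.val_succ, Fin.coe_castSucc,
        show (x.2:ℕ)+((x.1:ℕ)+1) = ((x.1:ℕ)+(x.2:ℕ))+1 by ring, pow_succ]
      ring
    rw [hsgn, neg_smul]

/-- The chain homotopy identity on cycles. -/
lemma prism_boundary (hφ0 : ∀ x, φ (x, 0) = f x) (hφ1 : ∀ x, φ (x, 1) = g x)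
    (n : ℕ) (ξ : (filtSys X).Chains G n)
    (hcyc : (filtSys X).bdryFrom G n ξ = 0) :
    (filtSys Y).bdryFrom G (n+1) (prHom G F' φ n ξ) =
      pushChain F' g G n ξ - pushChain F' f G n ξ := by
  show (filtSys Y).bdry G n (prHom G F' φ n ξ) = _
  cases n with
  | zero =>
    have h2 : ((filtSys Y).bdry G 0).comp (prHom G F' φ 0)
        = (pushChain F' g G 0) - (pushChain F' f G 0) := by
      apply Finsupp.addHom_ext
      intro σ a
      rw [AddMonoidHom.comp_apply, AddMonoidHom.sub_apply]
      rw [core_boundary G F' φ f g hφ0 hφ1 0 σ a, pushChain_single, pushChain_single]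
      simp
    have h3 := congrArg (fun (h : _ →+ _) => h ξ) h2
    simp only [AddMonoidHom.comp_apply, AddMonoidHom.sub_apply] at h3
    exact h3
  | succ r =>
    have h2 : ((filtSys Y).bdry G (r+1)).comp (prHom G F' φ (r+1))
        = pushChain F' g G (r+1) - pushChain F' f G (r+1)
          - (prHom G F' φ r).comp ((filtSys X).bdry G r) := by
      apply Finsupp.addHom_ext
      intro σ a
      simp only [AddMonoidHom.comp_apply, AddMonoidHom.sub_apply]
      rw [core_boundary G F' φ f g hφ0 hφ1 (r+1) σ a,
        reindex_sum G F' φ r σ a, pushChain_single, pushChain_single]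
      abel
    have h3 := congrArg (fun (h : _ →+ _) => h ξ) h2
    simp only [AddMonoidHom.comp_apply, AddMonoidHom.sub_apply] at h3
    rw [h3]
    have h4 : (filtSys X).bdry G r ξ = 0 := hcyc
    rw [h4, map_zero, sub_zero]

end AuxReindex
section AuxPieces

variable {X : Type u} [TopologicalSpace X]

/-- The maximum of the blocks over the support of a point of the simplex. -/
def bMax {m : ℕ} (β : Fin (m+1) → ℤ) (t : ↥(TSimp m)) : ℤ :=
  (suppF t).sup' (suppF_nonempty t) β

lemma le_bMax {m : ℕ} (β : Fin (m+1) → ℤ) {t : ↥(TSimp m)} {j : Fin (m+1)}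
    (hj : (t : Fin (m+1) → ℝ) j ≠ 0) : β j ≤ bMax β t :=
  Finset.le_sup' β (mem_suppF.mpr hj)

lemma bMax_attained {m : ℕ} (β : Fin (m+1) → ℤ) (t : ↥(TSimp m)) :
    ∃ j, (t : Fin (m+1) → ℝ) j ≠ 0 ∧ bMax β t = β j := by
  obtain ⟨j, hj, he⟩ := Finset.exists_mem_eq_sup' (suppF_nonempty t) β
  exact ⟨j, mem_suppF.mp hj, he⟩

lemma bMax_le {m : ℕ} (β : Fin (m+1) → ℤ) (t : ↥(TSimp m)) {b : ℤ}
    (h : ∀ j, (t : Fin (m+1) → ℝ) j ≠ 0 → β j ≤ b) : bMax β t ≤ b :=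
  Finset.sup'_le _ _ (fun j hj => h j (mem_suppF.mp hj))

lemma bMax_val_congr {m : ℕ} (β : Fin (m+1) → ℤ) {t t' : ↥(TSimp m)}
    (h : (t : Fin (m+1) → ℝ) = (t' : Fin (m+1) → ℝ)) : bMax β t = bMax β t' := by
  have : t = t' := Subtype.ext h
  rw [this]

lemma filtered_mem_filt_iff (F : FilteredSpace X) {m : ℕ} {σ : PreSimplex X m}
    (hσ : σ.IsFiltered F) (t : ↥(TSimp m)) (i : ℤ) :
    σ.map t ∈ F.filt i ↔ ∀ j, (t : Fin (m+1) → ℝ) j ≠ 0 → σ.block j ≤ i := by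
  have h2 : t ∈ σ.map ⁻¹' (F.filt i) ↔
      t ∈ {t : ↥(TSimp m) | ∀ j, (t : Fin (m+1) → ℝ) j ≠ 0 → σ.block j ≤ i} := by
    rw [hσ.2 i]
  exact h2

lemma filtered_level (F : FilteredSpace X) {m : ℕ} {σ : PreSimplex X m}
    (hσ : σ.IsFiltered F) (t : ↥(TSimp m)) :
    σ.map t ∈ F.filt (bMax σ.block t) \ F.filt (bMax σ.block t - 1) := by
  constructor
  · rw [filtered_mem_filt_iff F hσ]
    exact fun j hj => le_bMax _ hj
  · intro hmem
    rw [filtered_mem_filt_iff F hσ] at hmem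
    obtain ⟨j₀, hj₀, he⟩ := bMax_attained σ.block t
    have := hmem j₀ hj₀
    omega

/-- The piece of the simplex on which the blocks attain maximum `b`. -/
def pieceSet {m : ℕ} (β : Fin (m+1) → ℤ) (b : ℤ) : Set ↥(TSimp m) :=
  {t | bMax β t = b}

/-- The indices with block at most `b`. -/
def blockFace {m : ℕ} (β : Fin (m+1) → ℤ) (b : ℤ) : Finset (Fin (m+1)) :=
  Finset.filter (fun j => β j ≤ b) Finset.univ

lemma blockFace_card_pos {m : ℕ} (β : Fin (m+1) → ℤ) (b : ℤ) (hb : ∃ j, β j = b) :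
    0 < (blockFace β b).card :=
  Finset.card_pos.mpr ⟨hb.choose, by simp [blockFace, hb.choose_spec.le]⟩

lemma centerFun_mem {m : ℕ} (β : Fin (m+1) → ℤ) (b : ℤ) (hb : ∃ j, β j = b) :
    (fun i => if β i ≤ b then (((blockFace β b).card : ℝ))⁻¹ else 0) ∈ TSimp m := by
  have hcard := blockFace_card_pos β b hb
  have hcard' : (0:ℝ) < ((blockFace β b).card : ℝ) := by exact_mod_cast hcard
  constructor
  · intro i
    dsimp only
    split
    · positivity
    · exact le_refl 0
  · rw [← Finset.sum_filter, Finset.sum_const, nsmul_eq_mul]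
    show ((blockFace β b).card : ℝ) * _ = 1
    rw [mul_inv_cancel₀ hcard'.ne']

/-- The barycenter of the face spanned by the vertices with block at most `b`. -/
def centerPt {m : ℕ} (β : Fin (m+1) → ℤ) (b : ℤ) (hb : ∃ j, β j = b) : ↥(TSimp m) :=
  ⟨_, centerFun_mem β b hb⟩

lemma centerPt_coord {m : ℕ} (β : Fin (m+1) → ℤ) (b : ℤ) (hb : ∃ j, β j = b)
    (j : Fin (m+1)) :
    (centerPt β b hb : Fin (m+1) → ℝ) j ≠ 0 ↔ β j ≤ b := by
  have hcard := blockFace_card_pos β b hb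
  have hcard' : (0:ℝ) < ((blockFace β b).card : ℝ) := by exact_mod_cast hcard
  show (if β j ≤ b then (((blockFace β b).card : ℝ))⁻¹ else 0) ≠ 0 ↔ _
  split
  · rename_i h
    simp only [h, iff_true, ne_eq, inv_eq_zero]
    exact hcard'.ne'
  · rename_i h
    simp [h]

lemma bMax_centerPt {m : ℕ} (β : Fin (m+1) → ℤ) (b : ℤ) (hb : ∃ j, β j = b) :
    bMax β (centerPt β b hb) = b := by
  apply le_antisymm
  · exact bMax_le _ _ (fun j hj => (centerPt_coord β b hb j).mp hj)
  · have h1 : (centerPt β b hb : Fin (m+1) → ℝ) hb.choose ≠ 0 :=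
      (centerPt_coord β b hb hb.choose).mpr hb.choose_spec.le
    have := le_bMax β h1
    rw [hb.choose_spec] at this
    exact this

lemma centerPt_mem_piece {m : ℕ} (β : Fin (m+1) → ℤ) (b : ℤ) (hb : ∃ j, β j = b) :
    centerPt β b hb ∈ pieceSet β b := bMax_centerPt β b hb

lemma comb_mem {m : ℕ} (c y : ↥(TSimp m)) {s : ℝ} (h0 : 0 ≤ s) (h1 : s ≤ 1) :
    (1-s) • (c : Fin (m+1) → ℝ) + s • (y : Fin (m+1) → ℝ) ∈ TSimp m :=
  (convex_stdSimplex ℝ (Fin (m+1))) c.2 y.2 (by linarith) h0 (by ring)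

lemma comb_piece {m : ℕ} {β : Fin (m+1) → ℤ} {b' : ℤ} (x y z : ↥(TSimp m))
    (hx : ∀ j, (x : Fin (m+1) → ℝ) j ≠ 0 → β j ≤ b') (hy : y ∈ pieceSet β b')
    {s : ℝ} (h0 : 0 < s) (h1 : s ≤ 1)
    (hz : (z : Fin (m+1) → ℝ) = (1-s) • (x : Fin (m+1) → ℝ) + s • (y : Fin (m+1) → ℝ)) :
    z ∈ pieceSet β b' := by
  have hcoord : ∀ j, (z : Fin (m+1) → ℝ) j = (1-s) * (x : Fin (m+1) → ℝ) j
      + s * (y : Fin (m+1) → ℝ) j := by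
    intro j
    rw [hz]
    simp [Pi.add_apply, Pi.smul_apply, smul_eq_mul]
  show bMax β z = b'
  apply le_antisymm
  · apply bMax_le
    intro j hj
    rw [hcoord j] at hj
    by_cases hxj : (x : Fin (m+1) → ℝ) j = 0
    · by_cases hyj : (y : Fin (m+1) → ℝ) j = 0
      · exfalso
        apply hj
        rw [hxj, hyj]
        ring
      · have := le_bMax β hyj
        rwa [hy] at this
    · exact hx j hxj
  · obtain ⟨j₀, hj₀, he⟩ := bMax_attained β y
    have hypos : 0 < (y : Fin (m+1) → ℝ) j₀ := lt_of_le_of_ne (y.2.1 j₀) (Ne.symm hj₀)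
    have hzpos : 0 < (z : Fin (m+1) → ℝ) j₀ := by
      rw [hcoord j₀]
      have h2 : 0 ≤ (1-s) * (x : Fin (m+1) → ℝ) j₀ :=
        mul_nonneg (by linarith) (x.2.1 j₀)
      have h3 : 0 < s * (y : Fin (m+1) → ℝ) j₀ := mul_pos h0 hypos
      linarith
    have := le_bMax β hzpos.ne'
    rw [← he, hy] at this
    exact this

lemma pieceSet_preconnected {m : ℕ} (β : Fin (m+1) → ℤ) (b : ℤ) (hb : ∃ j, β j = b) :
    IsPreconnected (pieceSet β b) := by
  set c := centerPt β b hb with hc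
  apply isPreconnected_of_forall c
  intro y hy
  have hmem : ∀ s : unitInterval,
      (1-(s:ℝ)) • (c : Fin (m+1) → ℝ) + (s:ℝ) • (y : Fin (m+1) → ℝ) ∈ TSimp m :=
    fun s => comb_mem c y s.2.1 s.2.2
  set γ : unitInterval → ↥(TSimp m) := fun s => ⟨_, hmem s⟩ with hγ
  refine ⟨γ '' Set.univ, ?_, ⟨0, trivial, ?_⟩, ⟨1, trivial, ?_⟩, ?_⟩
  · rintro _ ⟨s, -, rfl⟩
    by_cases hs : (s:ℝ) = 0
    · have hval : (γ s : Fin (m+1) → ℝ) = (c : Fin (m+1) → ℝ) := by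
        show (1-(s:ℝ)) • (c : Fin (m+1) → ℝ) + (s:ℝ) • (y : Fin (m+1) → ℝ) = _
        rw [hs]
        simp
      show bMax β (γ s) = b
      rw [bMax_val_congr β hval]
      exact centerPt_mem_piece β b hb
    · have hspos : 0 < (s:ℝ) := lt_of_le_of_ne s.2.1 (Ne.symm hs)
      exact comb_piece c y (γ s)
        (fun j hj => (centerPt_coord β b hb j).mp hj) hy hspos s.2.2 rfl
  · apply Subtype.ext
    show (1-((0:unitInterval):ℝ)) • (c : Fin (m+1) → ℝ) + _ • _ = (c : Fin (m+1) → ℝ)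
    simp
  · apply Subtype.ext
    show (1-((1:unitInterval):ℝ)) • (c : Fin (m+1) → ℝ) + _ • _ = (y : Fin (m+1) → ℝ)
    simp
  · apply IsPreconnected.image isPreconnected_univ
    apply Continuous.continuousOn
    apply Continuous.subtype_mk
    exact ((continuous_const.sub continuous_subtype_val).smul continuous_const).add
      (continuous_subtype_val.smul continuous_const)

lemma centerPt_mem_closure_piece {m : ℕ} (β : Fin (m+1) → ℤ) {b b' : ℤ}
    (hb : ∃ j, β j = b) (hb' : ∃ j, β j = b') (hle : b ≤ b') :
    centerPt β b hb ∈ closure (pieceSet β b') := by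
  set c := centerPt β b hb
  set c' := centerPt β b' hb'
  have ha : ∀ n : ℕ, 0 < (((n+2 : ℕ) : ℝ))⁻¹ ∧ (((n+2 : ℕ) : ℝ))⁻¹ ≤ 1 := by
    intro n
    constructor
    · positivity
    · rw [← one_div]
      apply div_le_one_of_le₀
      · exact_mod_cast Nat.le_add_left 1 (n+1)
      · positivity
  have hmem : ∀ n : ℕ,
      (1 - (((n+2 : ℕ) : ℝ))⁻¹) • (c : Fin (m+1) → ℝ)
        + (((n+2 : ℕ) : ℝ))⁻¹ • (c' : Fin (m+1) → ℝ) ∈ TSimp m :=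
    fun n => comb_mem c c' (ha n).1.le (ha n).2
  refine mem_closure_of_tendsto (b := (Filter.atTop : Filter ℕ))
    (f := fun n : ℕ => (⟨_, hmem n⟩ : ↥(TSimp m))) ?_
    (Filter.Eventually.of_forall ?_)
  · rw [tendsto_subtype_rng]
    have h1 : Filter.Tendsto (fun n : ℕ => (((n+2 : ℕ) : ℝ))⁻¹) Filter.atTop (nhds 0) := by
      apply Filter.Tendsto.inv_tendsto_atTop
      exact tendsto_natCast_atTop_atTop.comp (Filter.tendsto_add_atTop_nat 2)
    have h2 : Continuous (fun s : ℝ =>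
        (1-s) • (c : Fin (m+1) → ℝ) + s • (c' : Fin (m+1) → ℝ)) :=
      ((continuous_const.sub continuous_id).smul continuous_const).add
        (continuous_id.smul continuous_const)
    have h3 := (h2.tendsto 0).comp h1
    convert h3 using 2
    simp
    exact (by simp : (1 - (0:ℝ)) • (c : Fin (m+1) → ℝ) + (0:ℝ) • (c' : Fin (m+1) → ℝ) = c).symm
  · intro n
    exact comb_piece c c' _
      (fun j hj => le_trans ((centerPt_coord β b hb j).mp hj) hle)
      (centerPt_mem_piece β b' hb') (ha n).1 (ha n).2 rfl

end AuxPieces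
section AuxStrataData

variable {X : Type u} {Y : Type v} [TopologicalSpace X] [TopologicalSpace Y]

lemma exists_strata_data (F : FilteredSpace X) (F' : FilteredSpace Y)
    (hX : F.IsStratifiedSpace) (hY : F'.IsStratifiedSpace)
    (p : Set X → ℤ) (q : Set Y → ℤ) (hp : F.IsPerversity p) (hq : F'.IsPerversity q)
    (φ : C(X × ↥unitInterval, Y))
    (hφ : FilteredSpace.IsStratifiedMap (F.prodRight ↥unitInterval) F' ⇑φ)
    (hφp : ∀ T T', (FilteredSpace.prodRight ↥unitInterval F).IsStratum T →
      F'.IsStratum T' → ⇑φ '' T ⊆ T' →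
      F'.dualPerv q T' ≤
        (FilteredSpace.prodRight ↥unitInterval F).dualPerv (pervProdRight p) T)
    {m : ℕ} (σ : PreSimplex X m) (hσ : σ.IsFiltered F) :
    ∃ (SX : ℤ → Set X) (T' : ℤ → Set Y) (d' : ℤ → ℤ),
      (∀ b, (∃ j, σ.block j = b) →
        F.IsStratumDim (SX b) b ∧ F'.IsStratumDim (T' b) (d' b) ∧
        (∀ t : ↥(TSimp m), bMax σ.block t = b →
          σ.map t ∈ SX b ∧ ∀ u : ↥unitInterval, φ (σ.map t, u) ∈ T' b)) ∧
      (∀ b b', (∃ j, σ.block j = b) → (∃ j, σ.block j = b') → b ≤ b' → d' b ≤ d' b') ∧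
      (∀ b, (∃ j, σ.block j = b) →
        (F'.dim : ℤ) - d' b - q (T' b) ≤ (F.dim : ℤ) - b - p (SX b)) := by
  classical
  -- Stage 1 : the strata of X carrying the pieces
  have hS : ∀ b, (∃ j, σ.block j = b) → ∃ S : Set X,
      F.IsStratumDim S b ∧ σ.map '' (pieceSet σ.block b) ⊆ S := by
    intro b hb
    have hcenter := centerPt_mem_piece σ.block b hb
    have hlevel : ∀ t ∈ pieceSet σ.block b, σ.map t ∈ F.filt b \ F.filt (b-1) := by
      intro t ht
      have := filtered_level F hσ t
      rwa [show bMax σ.block t = b from ht] at this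
    refine ⟨connectedComponentIn (F.filt b \ F.filt (b-1)) (σ.map (centerPt σ.block b hb)),
      ⟨_, hlevel _ hcenter, rfl⟩, ?_⟩
    apply IsPreconnected.subset_connectedComponentIn
    · exact (pieceSet_preconnected σ.block b hb).image _ σ.map.continuous.continuousOn
    · exact ⟨_, hcenter, rfl⟩
    · rintro _ ⟨t, ht, rfl⟩
      exact hlevel t ht
  choose SX hSXdim hSXsub using hS
  -- Stage 2 : the image strata in Y
  have hT : ∀ b, ∀ hb : ∃ j, σ.block j = b, ∃ (T : Set Y) (d : ℤ),
      F'.IsStratumDim T d ∧ φ '' ((SX b hb) ×ˢ (Set.univ : Set ↥unitInterval)) ⊆ T ∧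
      (F'.dim : ℤ) - d ≤ (F.dim : ℤ) - b ∧
      F'.dualPerv q T ≤ (F.prodRight ↥unitInterval).dualPerv (pervProdRight p)
        ((SX b hb) ×ˢ (Set.univ : Set ↥unitInterval)) := by
    intro b hb
    have hstr : (F.prodRight ↥unitInterval).IsStratumDim
        ((SX b hb) ×ˢ (Set.univ : Set ↥unitInterval)) b :=
      prodRight_isStratumDim F (hSXdim b hb)
    obtain ⟨T, hT1, hT2, hT3⟩ := hφ.2 _ ⟨b, hstr⟩
    have hd : F'.IsStratumDim T (F'.stratumDim T) := F'.isStratumDim_stratumDim hT1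
    refine ⟨T, F'.stratumDim T, hd, hT2, ?_, hφp _ T ⟨b, hstr⟩ hT1 hT2⟩
    have he1 : F'.codim T = (F'.dim : ℤ) - F'.stratumDim T := by
      rw [FilteredSpace.codim]
    have he2 : (F.prodRight ↥unitInterval).codim ((SX b hb) ×ˢ (Set.univ : Set ↥unitInterval))
        = (F.dim : ℤ) - b := by
      rw [FilteredSpace.codim, (F.prodRight ↥unitInterval).stratumDim_eq hstr]
      rfl
    rw [he1, he2] at hT3
    exact hT3
  choose T' d' hT'dim hT'sub hT'codim hT'perv using hT
  -- membership of prism points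
  have hmemb : ∀ b, ∀ hb : ∃ j, σ.block j = b, ∀ t : ↥(TSimp m), bMax σ.block t = b →
      σ.map t ∈ SX b hb ∧ ∀ u : ↥unitInterval, φ (σ.map t, u) ∈ T' b hb := by
    intro b hb t ht
    have h1 : σ.map t ∈ SX b hb := hSXsub b hb ⟨t, ht, rfl⟩
    exact ⟨h1, fun u => hT'sub b hb ⟨(σ.map t, u), ⟨h1, trivial⟩, rfl⟩⟩
  -- monotonicity of the image dimensions
  have hmono : ∀ b b', ∀ hb : ∃ j, σ.block j = b, ∀ hb' : ∃ j, σ.block j = b',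
      b < b' → d' b hb ≤ d' b' hb' := by
    intro b b' hb hb' hlt
    have h1 : σ.map (centerPt σ.block b hb) ∈ closure (σ.map '' pieceSet σ.block b') :=
      image_closure_subset_closure_image σ.map.continuous
        ⟨_, centerPt_mem_closure_piece σ.block hb hb' hlt.le, rfl⟩
    have h2 : σ.map (centerPt σ.block b hb) ∈ closure (SX b' hb') :=
      closure_mono (hSXsub b' hb') h1
    have h3 : (SX b hb ∩ closure (SX b' hb')).Nonempty :=
      ⟨_, hSXsub b hb ⟨_, centerPt_mem_piece σ.block b hb, rfl⟩, h2⟩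
    have h4 : SX b hb ⊆ closure (SX b' hb') :=
      hX _ _ ⟨b, hSXdim b hb⟩ ⟨b', hSXdim b' hb'⟩ h3
    have h5 : (SX b hb ×ˢ (Set.univ : Set ↥unitInterval)) ⊆
        closure (SX b' hb' ×ˢ (Set.univ : Set ↥unitInterval)) := by
      rw [closure_prod_eq]
      exact Set.prod_mono h4 subset_closure
    have hm : (σ.map (centerPt σ.block b hb), (0 : ↥unitInterval)) ∈
        SX b hb ×ˢ (Set.univ : Set ↥unitInterval) :=
      ⟨hSXsub b hb ⟨_, centerPt_mem_piece σ.block b hb, rfl⟩, trivial⟩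
    have h6 : (T' b hb ∩ closure (T' b' hb')).Nonempty := by
      refine ⟨φ (σ.map (centerPt σ.block b hb), 0), hT'sub b hb ⟨_, hm, rfl⟩, ?_⟩
      have himg : φ '' (SX b hb ×ˢ (Set.univ : Set ↥unitInterval)) ⊆
          closure (T' b' hb') := by
        calc φ '' (SX b hb ×ˢ (Set.univ : Set ↥unitInterval))
            ⊆ φ '' closure (SX b' hb' ×ˢ (Set.univ : Set ↥unitInterval)) :=
              Set.image_mono h5
          _ ⊆ closure (φ '' (SX b' hb' ×ˢ (Set.univ : Set ↥unitInterval))) :=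
              image_closure_subset_closure_image φ.continuous
          _ ⊆ closure (T' b' hb') := closure_mono (hT'sub b' hb')
      exact himg ⟨_, hm, rfl⟩
    have h7 : T' b hb ⊆ closure (T' b' hb') :=
      hY _ _ ⟨_, hT'dim b hb⟩ ⟨_, hT'dim b' hb'⟩ h6
    have h8 : closure (T' b' hb') ⊆ F'.filt (d' b' hb') :=
      closure_minimal (fun y hy => (F'.stratum_subset (hT'dim b' hb') hy).1)
        (F'.filt_closed _)
    obtain ⟨y, hy⟩ := (hT'dim b hb).nonempty F'
    have hylevel := F'.stratum_subset (hT'dim b hb) hy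
    exact (F'.mem_filt_iff_of_level hylevel).mp (h8 (h7 hy))
  -- the perversity estimate
  have hperv : ∀ b, ∀ hb : ∃ j, σ.block j = b,
      (F'.dim : ℤ) - d' b hb - q (T' b hb) ≤ (F.dim : ℤ) - b - p (SX b hb) := by
    intro b hb
    have hstr : (F.prodRight ↥unitInterval).IsStratumDim
        ((SX b hb) ×ˢ (Set.univ : Set ↥unitInterval)) b :=
      prodRight_isStratumDim F (hSXdim b hb)
    have hDp := hT'perv b hb
    have hdim' := F'.stratumDim_eq (hT'dim b hb)
    have hdimp := (F.prodRight ↥unitInterval).stratumDim_eq hstr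
    have hpervProd : pervProdRight p ((SX b hb) ×ˢ (Set.univ : Set ↥unitInterval))
        = p (SX b hb) := by
      unfold pervProdRight
      rw [Set.fst_image_prod _ Set.univ_nonempty]
    have hbb := F.stratumDim_bounds (hSXdim b hb)
    have hdd := F'.stratumDim_bounds (hT'dim b hb)
    have hcod := hT'codim b hb
    have hdimeq : ((F.prodRight ↥unitInterval).dim : ℤ) = (F.dim : ℤ) := rfl
    unfold FilteredSpace.dualPerv at hDp
    by_cases hreg : (F.prodRight ↥unitInterval).IsRegularStratum
        ((SX b hb) ×ˢ (Set.univ : Set ↥unitInterval))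
    · have hb_dim : b = (F.dim : ℤ) := by
        have h9 := (F.prodRight ↥unitInterval).stratumDim_unique hstr hreg
        rw [hdimeq] at h9
        exact h9
      have hSreg : F.IsRegularStratum (SX b hb) :=
        F.isRegular_of_codim_eq (hSXdim b hb) hb_dim
      have hp0 : p (SX b hb) = 0 := hp _ hSreg
      have hd_dim : d' b hb = (F'.dim : ℤ) := by omega
      have hT'reg : F'.IsRegularStratum (T' b hb) :=
        F'.isRegular_of_codim_eq (hT'dim b hb) hd_dim
      have hq0 : q (T' b hb) = 0 := hq _ hT'reg
      omega
    · rw [if_neg hreg] at hDp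
      by_cases hreg' : F'.IsRegularStratum (T' b hb)
      · rw [if_pos hreg'] at hDp
        have hq0 : q (T' b hb) = 0 := hq _ hreg'
        have hd_dim : d' b hb = (F'.dim : ℤ) :=
          F'.stratumDim_unique (hT'dim b hb) hreg'
        rw [FilteredSpace.codim, hdimp, hpervProd, hdimeq] at hDp
        omega
      · rw [if_neg hreg'] at hDp
        rw [FilteredSpace.codim, FilteredSpace.codim, hdim', hdimp, hpervProd, hdimeq] at hDp
        omega
  -- assemble with total functions
  refine ⟨fun b => if hb : ∃ j, σ.block j = b then SX b hb else ∅,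
    fun b => if hb : ∃ j, σ.block j = b then T' b hb else ∅,
    fun b => if hb : ∃ j, σ.block j = b then d' b hb else 0, ?_, ?_, ?_⟩
  · intro b hb
    simp only [dif_pos hb]
    exact ⟨hSXdim b hb, hT'dim b hb, hmemb b hb⟩
  · intro b b' hb hb' hle
    simp only [dif_pos hb, dif_pos hb']
    rcases eq_or_lt_of_le hle with rfl | hlt
    · exact le_refl _
    · exact hmono b b' hb hb' hlt
  · intro b hb
    simp only [dif_pos hb]
    exact hperv b hb

end AuxStrataData
section AuxAllowable

variable {X : Type u} {Y : Type v} [TopologicalSpace X] [TopologicalSpace Y]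

lemma sPt_coord_ne_iff {m : ℕ} (k : Fin (m+1)) (t : ↥(TSimp (m+1))) (j'' : Fin (m+1)) :
    (sPt m k t : Fin (m+1) → ℝ) j'' ≠ 0 ↔
      ∃ i, (t : Fin (m+2) → ℝ) i ≠ 0 ∧ projIdx m k i = j'' := by
  show sFun m k _ j'' ≠ 0 ↔ _
  unfold sFun
  constructor
  · intro h
    obtain ⟨i, -, hi⟩ := Finset.exists_ne_zero_of_sum_ne_zero h
    by_cases hp : projIdx m k i = j''
    · rw [if_pos hp] at hi
      exact ⟨i, hi, hp⟩
    · rw [if_neg hp] at hi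
      exact absurd rfl hi
  · rintro ⟨i, hti, hpi⟩
    have hpos : 0 < (t : Fin (m+2) → ℝ) i := lt_of_le_of_ne (t.2.1 i) (Ne.symm hti)
    have hle : (t : Fin (m+2) → ℝ) i ≤
        ∑ i' : Fin (m+2), if projIdx m k i' = j'' then (t : Fin (m+2) → ℝ) i' else 0 := by
      have := Finset.single_le_sum
        (f := fun i' : Fin (m+2) => if projIdx m k i' = j'' then (t : Fin (m+2) → ℝ) i' else 0)
        (fun i' _ => by
          split
          · exact t.2.1 i'
          · exact le_refl 0)
        (Finset.mem_univ i)
      rwa [if_pos hpi] at this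
    intro hc
    rw [hc] at hle
    linarith

lemma bMax_sPt {m : ℕ} (β : Fin (m+1) → ℤ) (k : Fin (m+1)) (t : ↥(TSimp (m+1))) :
    bMax β (sPt m k t) = bMax (fun i => β (projIdx m k i)) t := by
  apply le_antisymm
  · apply bMax_le
    intro j'' hj''
    obtain ⟨i, hti, hpi⟩ := (sPt_coord_ne_iff k t j'').mp hj''
    rw [← hpi]
    exact le_bMax _ hti
  · apply bMax_le
    intro i hti
    exact le_bMax β ((sPt_coord_ne_iff k t (projIdx m k i)).mpr ⟨i, hti, rfl⟩)

lemma bMax_vert {m : ℕ} (β : Fin (m+1) → ℤ) (j : Fin (m+1)) :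
    bMax β (vert m j) = β j := by
  have hcoord : ∀ i, (vert m j : Fin (m+1) → ℝ) i ≠ 0 ↔ i = j := by
    intro i
    show (if i = j then (1:ℝ) else 0) ≠ 0 ↔ i = j
    split
    · simp_all
    · simp_all
  apply le_antisymm
  · apply bMax_le
    intro i hi
    rw [(hcoord i).mp hi]
  · exact le_bMax β ((hcoord j).mpr rfl)

lemma sInf_filt_of_level (F' : FilteredSpace Y) {T : Set Y} {d : ℤ}
    (hT : F'.IsStratumDim T d) {y : Y} (hy : y ∈ T) :
    sInf {i : ℤ | y ∈ F'.filt i} = d := by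
  have hl := F'.stratum_subset hT hy
  have he : {i : ℤ | y ∈ F'.filt i} = Set.Ici d :=
    Set.ext (fun i => F'.mem_filt_iff_of_level hl)
  rw [he, csInf_Ici]

lemma suppCard_le_sPt {m : ℕ} (k : Fin (m+1)) (t : ↥(TSimp (m+1))) :
    suppCard t ≤ suppCard (sPt m k t) + 1 := by
  classical
  rw [suppCard_eq, suppCard_eq]
  set x₀ : Fin (m+2) := ⟨k.val + 1, by have := k.isLt; omega⟩ with hx₀
  have h1 : (suppF t).card ≤ (suppF t \ {x₀}).card + 1 := by
    calc (suppF t).card ≤ ((suppF t \ {x₀}) ∪ {x₀}).card := by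
          apply Finset.card_le_card
          intro i hi
          rw [Finset.mem_union, Finset.mem_sdiff, Finset.mem_singleton]
          by_cases hix : i = x₀
          · exact Or.inr hix
          · exact Or.inl ⟨hi, hix⟩
      _ ≤ (suppF t \ {x₀}).card + ({x₀} : Finset (Fin (m+2))).card := Finset.card_union_le _ _
      _ = (suppF t \ {x₀}).card + 1 := by rw [Finset.card_singleton]
  have h2 : (suppF t \ {x₀}).card ≤ (suppF (sPt m k t)).card := by
    apply Finset.card_le_card_of_injOn (projIdx m k)
    · intro i hi
      rw [Finset.mem_coe, Finset.mem_sdiff] at hi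
      exact mem_suppF.mpr ((sPt_coord_ne_iff k t (projIdx m k i)).mpr
        ⟨i, mem_suppF.mp hi.1, rfl⟩)
    · intro a ha b hb hab
      rw [Finset.mem_coe, Finset.mem_sdiff, Finset.mem_singleton] at ha hb
      have hA : a.val ≠ k.val+1 := fun hc => ha.2 (Fin.ext hc)
      have hB : b.val ≠ k.val+1 := fun hc => hb.2 (Fin.ext hc)
      have hv := congrArg Fin.val hab
      rw [projIdx_val, projIdx_val] at hv
      have hav := a.isLt
      have hbv := b.isLt
      apply Fin.ext
      split_ifs at hv <;> omega
  omega

lemma prism_allowable (F : FilteredSpace X) (F' : FilteredSpace Y)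
    (hX : F.IsStratifiedSpace) (hY : F'.IsStratifiedSpace)
    (p : Set X → ℤ) (q : Set Y → ℤ) (hp : F.IsPerversity p) (hq : F'.IsPerversity q)
    (φ : C(X × ↥unitInterval, Y))
    (hφ : FilteredSpace.IsStratifiedMap (F.prodRight ↥unitInterval) F' ⇑φ)
    (hφp : ∀ T T', (FilteredSpace.prodRight ↥unitInterval F).IsStratum T →
      F'.IsStratum T' → ⇑φ '' T ⊆ T' →
      F'.dualPerv q T' ≤
        (FilteredSpace.prodRight ↥unitInterval F).dualPerv (pervProdRight p) T)
    {m : ℕ} (σ : PreSimplex X m)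
    (hσf : σ.IsFiltered F) (hσa : σ.Admissible F p) (k : Fin (m+1)) :
    Allowable F' q Set.univ (preS F' (prC φ σ.map k)) := by
  obtain ⟨SX, T', d', hdata, hmono, hperv⟩ :=
    exists_strata_data F F' hX hY p q hp hq φ hφ hφp σ hσf
  have hAtt : ∀ i : Fin (m+2), ∃ j, σ.block j = σ.block (projIdx m k i) :=
    fun i => ⟨projIdx m k i, rfl⟩
  have hAttB : ∀ t : ↥(TSimp (m+1)), ∃ j, σ.block j = bMax σ.block (sPt m k t) := by
    intro t
    obtain ⟨j₀, hj₀, he⟩ := bMax_attained σ.block (sPt m k t)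
    exact ⟨j₀, he.symm⟩
  have hpt : ∀ t : ↥(TSimp (m+1)),
      prC φ σ.map k t ∈ T' (bMax σ.block (sPt m k t)) := by
    intro t
    exact ((hdata _ (hAttB t)).2.2 (sPt m k t) rfl).2 (uPt m k t)
  -- canonical blocks of the prism simplex
  have hcb : canonicalBlock F' (prC φ σ.map k)
      = fun j : Fin (m+2) => d' (σ.block (projIdx m k j)) := by
    funext j
    unfold canonicalBlock
    have h1 : prC φ σ.map k (vert (m+1) j) ∈ T' (σ.block (projIdx m k j)) := by
      have h2 := hpt (vert (m+1) j)
      rwa [sPt_vert m k j, bMax_vert] at h2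
    exact sInf_filt_of_level F' (hdata _ (hAtt j)).2.1 h1
  -- membership level characterization for prism points
  have hmemlvl : ∀ (t : ↥(TSimp (m+1))) (i : ℤ),
      prC φ σ.map k t ∈ F'.filt i ↔ d' (bMax σ.block (sPt m k t)) ≤ i := by
    intro t i
    have h1 := F'.stratum_subset (hdata _ (hAttB t)).2.1 (hpt t)
    exact F'.mem_filt_iff_of_level h1
  refine ⟨⟨?_, ?_⟩, ?_, Set.subset_univ _⟩
  · -- monotone blocks
    show Monotone (preS F' (prC φ σ.map k)).block
    show Monotone (canonicalBlock F' (prC φ σ.map k))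
    rw [hcb]
    intro a b hab
    exact hmono _ _ (hAtt a) (hAtt b) (hσf.1 (projIdx_monotone m k hab))
  · -- the filtration condition
    intro i
    ext t
    show prC φ σ.map k t ∈ F'.filt i ↔ _
    rw [hmemlvl t i]
    have hre : ∀ j : Fin (m+2), (preS F' (prC φ σ.map k)).block j
        = d' (σ.block (projIdx m k j)) := by
      intro j
      show canonicalBlock F' (prC φ σ.map k) j = _
      rw [hcb]
    constructor
    · intro hle j hj
      rw [hre j]
      have hb1 : σ.block (projIdx m k j) ≤ bMax σ.block (sPt m k t) := by
        rw [bMax_sPt]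
        exact le_bMax _ hj
      exact le_trans (hmono _ _ (hAtt j) (hAttB t) hb1) hle
    · intro hall
      obtain ⟨i₀, hti₀, he⟩ := bMax_attained (fun i' => σ.block (projIdx m k i')) t
      have := hall i₀ hti₀
      rw [hre i₀] at this
      rw [bMax_sPt, he]
      exact this
  · -- admissibility
    intro S hS t ht
    obtain ⟨dS, hdS⟩ := hS
    have hSeq : S = T' (bMax σ.block (sPt m k t)) :=
      F'.stratum_eq_of_mem hdS (hdata _ (hAttB t)).2.1 ht (hpt t)
    set b := bMax σ.block (sPt m k t) with hbdef
    have hcodS : F'.codim S = (F'.dim : ℤ) - d' b := by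
      rw [hSeq, FilteredSpace.codim, F'.stratumDim_eq (hdata _ (hAttB t)).2.1]
    have hqS : q S = q (T' b) := by rw [hSeq]
    have hadm := hσa (SX b) ⟨b, (hdata _ (hAttB t)).1⟩ (sPt m k t)
      ((hdata _ (hAttB t)).2.2 (sPt m k t) rfl).1
    have hcodSX : F.codim (SX b) = (F.dim : ℤ) - b := by
      rw [FilteredSpace.codim, F.stratumDim_eq (hdata _ (hAttB t)).1]
    rw [hcodSX] at hadm
    have hc1 : (suppCard t : ℤ) ≤ (suppCard (sPt m k t) : ℤ) + 1 := by
      exact_mod_cast suppCard_le_sPt k t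
    have hpv := hperv b (hAttB t)
    rw [hcodS, hqS]
    push_cast
    push_cast at hadm
    omega

end AuxAllowable
/-! ## STATEMENT 3 : stratified homotopic maps (through a homotopy with
`φ^* D q̄ ≤ D p̄`) induce the same map in intersection homology. -/

theorem stratified_homotopy_invariance
    {X : Type u} {Y : Type v} [TopologicalSpace X] [TopologicalSpace Y]
    [T2Space X] [T2Space Y]
    (F : FilteredSpace X) (F' : FilteredSpace Y)
    (hX : F.IsStratifiedSpace) (hY : F'.IsStratifiedSpace)
    (p : Set X → ℤ) (q : Set Y → ℤ) (hp : F.IsPerversity p) (hq : F'.IsPerversity q)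
    (f g : C(X, Y))
    (hf : FilteredSpace.IsStratifiedMap F F' ⇑f) (hg : FilteredSpace.IsStratifiedMap F F' ⇑g)
    (φ : C(X × ↥unitInterval, Y))
    (hφ : FilteredSpace.IsStratifiedMap (FilteredSpace.prodRight ↥unitInterval F) F' ⇑φ)
    (hφ0 : ∀ x, φ (x, 0) = f x) (hφ1 : ∀ x, φ (x, 1) = g x)
    (hφp : ∀ T T', (FilteredSpace.prodRight ↥unitInterval F).IsStratum T →
      F'.IsStratum T' → ⇑φ '' T ⊆ T' →
      F'.dualPerv q T' ≤
        (FilteredSpace.prodRight ↥unitInterval F).dualPerv (pervProdRight p) T)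
    (G : Type w) [AddCommGroup G] :
    ∀ (m : ℕ) (ξ : (filtSys X).Chains G m),
      ξ ∈ relCycles ((filtSys X).bdryFrom G) (fun k => iChains F p G Set.univ k)
        (fun _ => ⊥) m →
      ∀ (hfξ : pushChain F' f G m ξ ∈ relCycles ((filtSys Y).bdryFrom G)
          (fun k => iChains F' q G Set.univ k) (fun _ => ⊥) m)
        (hgξ : pushChain F' g G m ξ ∈ relCycles ((filtSys Y).bdryFrom G)
          (fun k => iChains F' q G Set.univ k) (fun _ => ⊥) m),
        hcl ((filtSys Y).bdryFrom G) (fun k => iChains F' q G Set.univ k) (fun _ => ⊥)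
            (pushChain F' f G m ξ) hfξ =
          hcl ((filtSys Y).bdryFrom G) (fun k => iChains F' q G Set.univ k) (fun _ => ⊥)
            (pushChain F' g G m ξ) hgξ := by
  intro m ξ hξ hfξ hgξ
  classical
  have hcyc : (filtSys X).bdryFrom G m ξ = 0 :=
    (AddSubgroup.mem_bot).mp (AddSubgroup.mem_comap.mp hξ.2)
  have hbd : (filtSys Y).bdryFrom G (m+1) (prHom G F' φ m ξ)
      = pushChain F' g G m ξ - pushChain F' f G m ξ :=
    prism_boundary G F' φ f g hφ0 hφ1 m ξ hcyc
  have hηmem : prHom G F' φ m ξ ∈ iChains F' q G Set.univ (m+1) := by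
    constructor
    · intro τ hτ
      obtain ⟨σ, hσ, k, rfl⟩ := prHom_support G F' φ ξ τ hτ
      have hσallow : Allowable F p Set.univ σ := hξ.1.1 σ hσ
      exact prism_allowable F F' hX hY p q hp hq φ hφ hφp σ hσallow.1 hσallow.2.1 k
    · intro τ hτ
      rw [hbd] at hτ
      rcases Finset.mem_union.mp (Finsupp.support_sub hτ) with h | h
      · exact hgξ.1.1 τ h
      · exact hfξ.1.1 τ h
  unfold hcl
  rw [QuotientAddGroup.eq]
  rw [AddSubgroup.mem_addSubgroupOf]
  have hco : ((- (⟨pushChain F' f G m ξ, hfξ⟩ :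
        relCycles ((filtSys Y).bdryFrom G) (fun k => iChains F' q G Set.univ k)
          (fun _ => ⊥) m)
      + (⟨pushChain F' g G m ξ, hgξ⟩ :
        relCycles ((filtSys Y).bdryFrom G) (fun k => iChains F' q G Set.univ k)
          (fun _ => ⊥) m) : relCycles ((filtSys Y).bdryFrom G)
            (fun k => iChains F' q G Set.univ k) (fun _ => ⊥) m)
      : (filtSys Y).Chains G m)
      = pushChain F' g G m ξ - pushChain F' f G m ξ := by
    rw [AddSubgroup.coe_add, AddSubgroup.coe_neg]
    rw [neg_add_eq_sub]
  refine ⟨?_, SetLike.coe_mem _⟩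
  rw [hco]
  apply AddSubgroup.mem_sup_left
  exact AddSubgroup.mem_map.mpr ⟨prHom G F' φ m ξ, hηmem, hbd⟩

end
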